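/- arXiv:2111.01442 — 4 statements merged into one kernel-verified Lean document; each statement's English description precedes it below -/
import Mathlib

section
/- Let n ≥ 1 be an integer, 0 < s < n, and f ∈ L^1(ℝ^n). Then ‖M_s f‖_{L^{n/(n−s),∞}(ℝ^n)} ≥ ‖f‖_{L^1(ℝ^n)}. -/
open MeasureTheory Real Set
open scoped ENNReal

noncomputable section

abbrev Rn (n : ℕ) := EuclideanSpace ℝ (Fin n)

/-- The constant `γ_s = 2^{-s} π^{-n/2} Γ((n-s)/2) / Γ(s/2)`. -/
def rieszGamma (n : ℕ) (s : ℝ) : ℝ :=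
  (2 : ℝ) ^ (-s) * Real.pi ^ (-(n : ℝ) / 2) * Real.Gamma (((n : ℝ) - s) / 2) / Real.Gamma (s / 2)

/-- The Riesz potential `I_s f (x) = γ_s ∫ f(x-y) |y|^{s-n} dy`. -/
def rieszPotential (n : ℕ) (s : ℝ) (f : Rn n → ℝ) (x : Rn n) : ℝ :=
  rieszGamma n s * ∫ y : Rn n, f (x - y) * ‖y‖ ^ (s - (n : ℝ))

/-- `v_n`, the Lebesgue measure of the unit ball of `ℝ^n`. -/
def unitBallVol (n : ℕ) : ℝ := (volume (Metric.ball (0 : Rn n) 1)).toReal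

/-- The weak `L^{n/(n-s)}` quasinorm `sup_{λ>0} λ |{|g|>λ}|^{(n-s)/n}`. -/
def weakNorm (n : ℕ) (s : ℝ) (g : Rn n → ℝ) : ℝ :=
  sSup {c : ℝ | ∃ lam : ℝ, 0 < lam ∧
    c = lam * (volume {x : Rn n | lam < |g x|}).toReal ^ (((n : ℝ) - s) / (n : ℝ))}

/-- The norm `⦀g⦀_r = sup_{0<|E|<∞} |E|^{-1/r+(n-s)/n} (∫_E |g|^r)^{1/r}`. -/
def tripleNorm (n : ℕ) (s r : ℝ) (g : Rn n → ℝ) : ℝ :=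
  sSup {c : ℝ | ∃ E : Set (Rn n), MeasurableSet E ∧ 0 < volume E ∧ volume E < ⊤ ∧
    c = (volume E).toReal ^ (-1 / r + ((n : ℝ) - s) / (n : ℝ)) *
      (∫ x in E, |g x| ^ r) ^ (1 / r)}

section AuxWeakBound
open Metric


lemma tsum_rpow_le_rpow_tsum {ι : Type*} (g : ι → ℝ≥0∞) {p : ℝ} (hp : 1 ≤ p) :
    ∑' i, g i ^ p ≤ (∑' i, g i) ^ p := by
  have hp0 : (0:ℝ) < p := lt_of_lt_of_le one_pos hp
  set T := ∑' i, g i with hT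
  rcases eq_or_ne T ⊤ with htop | htop
  · rw [htop, ENNReal.top_rpow_of_pos hp0]; exact le_top
  rcases eq_or_ne T 0 with h0 | h0
  · have hz : ∀ i, g i = 0 := ENNReal.tsum_eq_zero.1 h0
    simp [hz, ENNReal.zero_rpow_of_pos hp0]
  have key : ∀ i, g i ^ p ≤ T ^ (p - 1) * g i := by
    intro i
    rcases eq_or_ne (g i) 0 with hgi | hgi
    · simp [hgi, ENNReal.zero_rpow_of_pos hp0]
    have hgit : g i ≠ ⊤ := ne_top_of_le_ne_top htop (ENNReal.le_tsum i)
    have h1 : g i ^ p = g i ^ (p - 1) * g i := by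
      conv_lhs => rw [show p = (p-1)+1 by ring]
      rw [ENNReal.rpow_add _ _ hgi hgit, ENNReal.rpow_one]
    rw [h1]
    exact mul_le_mul_left (ENNReal.rpow_le_rpow (ENNReal.le_tsum i) (by linarith)) _
  calc ∑' i, g i ^ p ≤ ∑' i, T ^ (p - 1) * g i := ENNReal.tsum_le_tsum key
    _ = T ^ (p - 1) * T := by rw [ENNReal.tsum_mul_left]
    _ = T ^ p := by
        conv_rhs => rw [show p = (p-1)+1 by ring]
        rw [ENNReal.rpow_add _ _ h0 htop, ENNReal.rpow_one]


lemma weak_bound (n : ℕ) (hn : 1 ≤ n) (s : ℝ) (hs0 : 0 < s) (hsn : s < n)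
    (f : Rn n → ℝ) (hf : Integrable f) (lam : ℝ) (hlam : 0 < lam) :
    volume {x : Rn n | ∃ rad, 0 < rad ∧
        lam < (volume (Metric.ball x rad)).toReal ^ (-(1 - s / (n:ℝ))) *
          ∫ y in Metric.ball x rad, |f y|} ≤
      ENNReal.ofReal (4 ^ n) *
        (ENNReal.ofReal (∫ x, |f x|) / ENNReal.ofReal lam) ^ ((n:ℝ) / ((n:ℝ) - s)) := by
  have hn0 : (0:ℝ) < n := by exact_mod_cast hn
  set q : ℝ := 1 - s / n with hq_def
  have hq0 : 0 < q := by
    have : s / n < 1 := (div_lt_one hn0).2 hsn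
    simpa [hq_def] using this
  set p : ℝ := (n:ℝ) / ((n:ℝ) - s) with hp_def
  have hns : (0:ℝ) < (n:ℝ) - s := by linarith
  have hqp : q * p = 1 := by
    rw [hq_def, hp_def]; field_simp
  have hp0 : 0 < p := div_pos hn0 hns
  have hp1 : 1 ≤ p := by
    rw [hp_def, le_div_iff₀ hns]; linarith
  set I : ℝ := ∫ x, |f x| with hI_def
  have hI0 : 0 ≤ I := integral_nonneg fun x => abs_nonneg _
  set t : Set (Rn n) := {x : Rn n | ∃ rad, 0 < rad ∧
      lam < (volume (Metric.ball x rad)).toReal ^ (-(1 - s / (n:ℝ))) *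
        ∫ y in Metric.ball x rad, |f y|} with ht_def
  classical
  set rch : Rn n → ℝ := fun x =>
    if h : x ∈ t then h.choose else 1 with hrch_def
  have hspec : ∀ x ∈ t, 0 < rch x ∧
      lam < (volume (Metric.ball x (rch x))).toReal ^ (-q) *
        ∫ y in Metric.ball x (rch x), |f y| := by
    intro x hx
    have := hx.choose_spec
    simpa [hrch_def, dif_pos hx, hq_def] using this
  -- notation for each x ∈ t
  have key : ∀ x ∈ t, (volume (Metric.ball x (rch x))) <
      ENNReal.ofReal (((∫ y in Metric.ball x (rch x), |f y|) / lam) ^ p) := by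
    intro x hx
    obtain ⟨hr, hlt⟩ := hspec x hx
    set a : ℝ := ∫ y in Metric.ball x (rch x), |f y| with ha_def
    set w : ℝ := (volume (Metric.ball x (rch x))).toReal with hw_def
    have hw0 : 0 < w :=
      ENNReal.toReal_pos (measure_ball_pos volume x hr).ne' measure_ball_lt_top.ne
    have hwq : 0 < w ^ q := Real.rpow_pos_of_pos hw0 q
    have h1 : lam < a / w ^ q := by
      rw [Real.rpow_neg hw0.le] at hlt
      calc lam < (w ^ q)⁻¹ * a := hlt
        _ = a / w ^ q := by ring
    have h2 : w ^ q < a / lam := by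
      rw [lt_div_iff₀ hwq] at h1
      rw [lt_div_iff₀ hlam]
      linarith [h1]
    have h3 : w < (a / lam) ^ p := by
      have := Real.rpow_lt_rpow (Real.rpow_nonneg hw0.le q) h2 hp0
      rwa [← Real.rpow_mul hw0.le, hqp, Real.rpow_one] at this
      
    calc volume (Metric.ball x (rch x)) = ENNReal.ofReal w :=
          (ENNReal.ofReal_toReal measure_ball_lt_top.ne).symm
      _ < ENNReal.ofReal ((a / lam) ^ p) := by
          exact (ENNReal.ofReal_lt_ofReal_iff_of_nonneg hw0.le).2 h3
  -- volume of unit ball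
  set vT : ℝ := (volume (ball (0 : Rn n) 1)).toReal with hvT_def
  have hvT : 0 < vT :=
    ENNReal.toReal_pos (measure_ball_pos volume _ one_pos).ne' measure_ball_lt_top.ne
  -- radius bound
  set R : ℝ := ((I / lam) ^ p / vT) ^ ((n:ℝ)⁻¹) with hR_def
  have hrle : ∀ x ∈ t, rch x ≤ R := by
    intro x hx
    obtain ⟨hr, -⟩ := hspec x hx
    have hIa : (∫ y in ball x (rch x), |f y|) ≤ I :=
      setIntegral_le_integral hf.abs (Filter.Eventually.of_forall fun y => abs_nonneg _)
    have ha0 : 0 ≤ ∫ y in ball x (rch x), |f y| := integral_nonneg fun y => abs_nonneg _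
    have hw : (volume (Metric.ball x (rch x))).toReal ≤ (I / lam) ^ p := by
      apply le_trans (ENNReal.toReal_le_of_le_ofReal (by positivity) (key x hx).le)
      have hdiv : (∫ y in ball x (rch x), |f y|) / lam ≤ I / lam := by gcongr
      exact Real.rpow_le_rpow (by positivity) hdiv hp0.le
    have hwf : (volume (Metric.ball x (rch x))).toReal = rch x ^ n * vT := by
      rw [Measure.addHaar_ball_of_pos volume x hr, ENNReal.toReal_mul,
        ENNReal.toReal_ofReal (by positivity), finrank_euclideanSpace_fin]
    have hrn : rch x ^ n ≤ (I / lam) ^ p / vT := by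
      rw [le_div_iff₀ hvT]; rw [hwf] at hw; linarith
    have h1 : rch x ^ (n:ℝ) ≤ (I / lam) ^ p / vT := by
      rw [Real.rpow_natCast]; exact hrn
    calc rch x = (rch x ^ (n:ℝ)) ^ ((n:ℝ)⁻¹) := by
          rw [← Real.rpow_mul hr.le, mul_inv_cancel₀ hn0.ne', Real.rpow_one]
      _ ≤ R := Real.rpow_le_rpow (by positivity) h1 (by positivity)
  -- Vitali covering
  obtain ⟨u, hut, hdisj, hcov⟩ :=
    Vitali.exists_disjoint_subfamily_covering_enlargement_closedBall t id rch R hrle 4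
      (by norm_num)
  have hcount : u.Countable := by
    apply hdisj.countable_of_nonempty_interior
    intro b hb
    exact ⟨b, ball_subset_interior_closedBall (mem_ball_self (hspec b (hut hb)).1)⟩
  have hsub : t ⊆ ⋃ b ∈ u, closedBall b (4 * rch b) := by
    intro x hx
    obtain ⟨b, hbu, hba⟩ := hcov x hx
    exact mem_biUnion hbu (hba (mem_closedBall_self (hspec x hx).1.le))
  haveI : Countable u := hcount.to_subtype
  set L : ℝ≥0∞ := ENNReal.ofReal lam with hL_def
  set A : u → ℝ≥0∞ := fun b => ENNReal.ofReal (∫ y in ball (b : Rn n) (rch b), |f y|)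
    with hA_def
  have hApos : ∀ b : u, 0 ≤ ∫ y in ball (b : Rn n) (rch b), |f y| :=
    fun b => integral_nonneg fun y => abs_nonneg _
  have hsumA : ∑' b : u, A b ≤ ENNReal.ofReal I := by
    have heq : ∀ b : u, A b = ∫⁻ y in ball (b : Rn n) (rch b), ENNReal.ofReal |f y| := by
      intro b
      exact ofReal_integral_eq_lintegral_ofReal hf.abs.integrableOn
        (Filter.Eventually.of_forall fun y => abs_nonneg _)
    have hpair : Pairwise (Function.onFun Disjoint fun b : u => ball (b : Rn n) (rch b)) := by
      have h1 : Pairwise (Function.onFun Disjoint fun b : u => closedBall (b : Rn n) (rch b)) :=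
        hdisj.subtype _ _
      exact h1.mono fun i j h => h.mono ball_subset_closedBall ball_subset_closedBall
    calc ∑' b : u, A b
        = ∫⁻ y in ⋃ b : u, ball (b : Rn n) (rch b), ENNReal.ofReal |f y| := by
          rw [lintegral_iUnion (fun b => measurableSet_ball) hpair]
          exact tsum_congr heq
      _ ≤ ∫⁻ y, ENNReal.ofReal |f y| := setLIntegral_le_lintegral _ _
      _ = ENNReal.ofReal I :=
          (ofReal_integral_eq_lintegral_ofReal hf.abs
            (Filter.Eventually.of_forall fun y => abs_nonneg _)).symm
  calc volume t ≤ volume (⋃ b ∈ u, closedBall b (4 * rch b)) := measure_mono hsub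
    _ ≤ ∑' b : u, volume (closedBall (b : Rn n) (4 * rch b)) := measure_biUnion_le volume hcount _
    _ ≤ ∑' b : u, ENNReal.ofReal (4 ^ n) * (A b / L) ^ p := by
        apply ENNReal.tsum_le_tsum
        intro b
        have hrb := (hspec b (hut b.2)).1
        have hvol : volume (closedBall (b : Rn n) (4 * rch b)) =
            ENNReal.ofReal (4 ^ n) * volume (ball (b : Rn n) (rch b)) := by
          rw [Measure.addHaar_closedBall volume _ (by positivity : (0:ℝ) ≤ 4 * rch b),
            Measure.addHaar_ball_of_pos volume _ hrb, finrank_euclideanSpace_fin, mul_pow,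
            ENNReal.ofReal_mul (by positivity), mul_assoc]
        have hAL : ENNReal.ofReal (((∫ y in ball (b : Rn n) (rch b), |f y|) / lam) ^ p) =
            (A b / L) ^ p := by
          rw [← ENNReal.ofReal_rpow_of_nonneg (by positivity) hp0.le,
            ENNReal.ofReal_div_of_pos hlam]
        rw [hvol]
        exact mul_le_mul_right (hAL ▸ (key b (hut b.2)).le) _
    _ = ENNReal.ofReal (4 ^ n) * ∑' b : u, (A b / L) ^ p := ENNReal.tsum_mul_left
    _ ≤ ENNReal.ofReal (4 ^ n) * ((∑' b : u, A b) / L) ^ p := by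
        apply mul_le_mul_right
        calc ∑' b : u, (A b / L) ^ p = ∑' b : u, (A b) ^ p * (L⁻¹) ^ p := by
              apply tsum_congr; intro b
              rw [div_eq_mul_inv, ENNReal.mul_rpow_of_nonneg _ _ hp0.le]
          _ = (∑' b : u, (A b) ^ p) * (L⁻¹) ^ p := ENNReal.tsum_mul_right
          _ ≤ (∑' b : u, A b) ^ p * (L⁻¹) ^ p :=
              mul_le_mul_left (tsum_rpow_le_rpow_tsum _ hp1) _
          _ = ((∑' b : u, A b) / L) ^ p := by
              rw [← ENNReal.mul_rpow_of_nonneg _ _ hp0.le, div_eq_mul_inv]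
    _ ≤ ENNReal.ofReal (4 ^ n) * (ENNReal.ofReal I / L) ^ p := by
        apply mul_le_mul_right
        exact ENNReal.rpow_le_rpow (ENNReal.div_le_div_right hsumA _) hp0.le

end AuxWeakBound

/-- The centered fractional maximal function
`M_s f (x) = sup_{r>0} |B(x,r)|^{-(1-s/n)} ∫_{B(x,r)} |f|`. -/
def fracMaximal (n : ℕ) (s : ℝ) (f : Rn n → ℝ) (x : Rn n) : ℝ :=
  sSup {c : ℝ | ∃ rad : ℝ, 0 < rad ∧
    c = (volume (Metric.ball x rad)).toReal ^ (-(1 - s / (n : ℝ))) *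
      ∫ y in Metric.ball x rad, |f y|}

set_option maxHeartbeats 2000000 in
open Metric in
theorem statement7 (n : ℕ) (hn : 1 ≤ n) (s : ℝ) (hs0 : 0 < s) (hsn : s < n)
    (f : Rn n → ℝ) (hf : Integrable f) :
    weakNorm n s (fracMaximal n s f) ≥ ∫ x, |f x| := by
  classical
  have hn0 : (0:ℝ) < n := by exact_mod_cast hn
  have hns : (0:ℝ) < (n:ℝ) - s := by linarith
  set q : ℝ := ((n:ℝ) - s) / n with hq_def
  have hq0 : 0 < q := div_pos hns hn0
  have hq_eq : (1 - s / (n:ℝ)) = q := by rw [hq_def]; field_simp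
  set p : ℝ := (n:ℝ) / ((n:ℝ) - s) with hp_def
  have hp0 : 0 < p := div_pos hn0 hns
  have hpq : p * q = 1 := by rw [hp_def, hq_def]; field_simp
  set I : ℝ := ∫ x, |f x| with hI_def
  have hI0 : 0 ≤ I := integral_nonneg fun x => abs_nonneg _
  set vT : ℝ := (volume (ball (0 : Rn n) 1)).toReal with hvT_def
  have hvT : 0 < vT :=
    ENNReal.toReal_pos (measure_ball_pos volume _ one_pos).ne' measure_ball_lt_top.ne
  set T : Rn n → Set ℝ := fun x => {c : ℝ | ∃ rad : ℝ, 0 < rad ∧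
    c = (volume (Metric.ball x rad)).toReal ^ (-(1 - s / (n : ℝ))) *
      ∫ y in Metric.ball x rad, |f y|} with hT_def
  have hM_eq : ∀ x, fracMaximal n s f x = sSup (T x) := fun x => rfl
  have hT_ne : ∀ x, (T x).Nonempty := fun x => ⟨_, 1, one_pos, rfl⟩
  have hT_nonneg : ∀ x, ∀ c ∈ T x, 0 ≤ c := by
    rintro x c ⟨rad, hrad, rfl⟩
    exact mul_nonneg (Real.rpow_nonneg ENNReal.toReal_nonneg _)
      (integral_nonneg fun y => abs_nonneg _)
  have hM_nonneg : ∀ x, 0 ≤ fracMaximal n s f x := by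
    intro x
    rw [hM_eq x]
    exact Real.sSup_nonneg (hT_nonneg x)
  -- Step A : inclusion into the "witness" set
  have hsubA : ∀ lam : ℝ, 0 < lam → {x : Rn n | lam < |fracMaximal n s f x|} ⊆
      {x : Rn n | ∃ rad, 0 < rad ∧
        lam < (volume (Metric.ball x rad)).toReal ^ (-(1 - s / (n:ℝ))) *
          ∫ y in Metric.ball x rad, |f y|} := by
    intro lam hlam x hx
    simp only [mem_setOf_eq] at hx ⊢
    rw [abs_of_nonneg (hM_nonneg x), hM_eq x] at hx
    by_cases hbdd : BddAbove (T x)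
    · obtain ⟨c, hc, hlc⟩ := exists_lt_of_lt_csSup (hT_ne x) hx
      obtain ⟨rad, hrad, rfl⟩ := hc
      exact ⟨rad, hrad, hlc⟩
    · rw [Real.sSup_of_not_bddAbove hbdd] at hx; linarith
  -- weak bound in convenient form
  have hWB : ∀ lam : ℝ, 0 < lam →
      volume {x : Rn n | lam < |fracMaximal n s f x|} ≤
        ENNReal.ofReal (4 ^ n * (I / lam) ^ p) := by
    intro lam hlam
    refine le_trans (measure_mono (hsubA lam hlam))
      (le_trans (weak_bound n hn s hs0 hsn f hf lam hlam) ?_)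
    rw [← ENNReal.ofReal_div_of_pos hlam,
      ENNReal.ofReal_rpow_of_nonneg (by positivity) hp0.le,
      ← ENNReal.ofReal_mul (by positivity)]
  -- the set defining the weak norm
  set S : Set ℝ := {c : ℝ | ∃ lam : ℝ, 0 < lam ∧
    c = lam * (volume {x : Rn n | lam < |fracMaximal n s f x|}).toReal ^
      (((n : ℝ) - s) / (n : ℝ))} with hS_def
  have hWN : weakNorm n s (fracMaximal n s f) = sSup S := rfl
  have hSbdd : BddAbove S := by
    refine ⟨((4:ℝ) ^ n) ^ q * I, ?_⟩
    rintro c ⟨lam, hlam, rfl⟩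
    have h1 : (volume {x : Rn n | lam < |fracMaximal n s f x|}).toReal ≤ 4 ^ n * (I / lam) ^ p :=
      ENNReal.toReal_le_of_le_ofReal (by positivity) (hWB lam hlam)
    have h2 : (volume {x : Rn n | lam < |fracMaximal n s f x|}).toReal ^
        (((n : ℝ) - s) / (n : ℝ)) ≤ (4 ^ n * (I / lam) ^ p) ^ q := by
      rw [← hq_def]
      exact Real.rpow_le_rpow ENNReal.toReal_nonneg h1 hq0.le
    calc lam * (volume {x : Rn n | lam < |fracMaximal n s f x|}).toReal ^
          (((n : ℝ) - s) / (n : ℝ)) ≤ lam * (4 ^ n * (I / lam) ^ p) ^ q :=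
          mul_le_mul_of_nonneg_left h2 hlam.le
      _ = ((4:ℝ) ^ n) ^ q * I := by
          rw [Real.mul_rpow (by positivity) (by positivity),
            ← Real.rpow_mul (by positivity), hpq, Real.rpow_one]
          field_simp
  have hS_ne : S.Nonempty := ⟨_, 1, one_pos, rfl⟩
  have hS0 : ∀ c ∈ S, 0 ≤ c := by
    rintro c ⟨lam, hlam, rfl⟩
    positivity
  have hSup0 : 0 ≤ sSup S := Real.sSup_nonneg hS0
  rw [ge_iff_le, hWN]
  by_contra hlt
  push_neg at hlt
  have hIpos : 0 < I := lt_of_le_of_lt hSup0 hlt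
  set c : ℝ := (sSup S + I) / 2 with hc_def
  have hc_pos : 0 < c := by rw [hc_def]; linarith
  have hcS : sSup S < c := by rw [hc_def]; linarith
  have hcI : c < I := by rw [hc_def]; linarith
  set c' : ℝ := (c + I) / 2 with hc'_def
  have hcc' : c < c' := by rw [hc'_def]; linarith
  have hc'I : c' < I := by rw [hc'_def]; linarith
  have hc'0 : 0 < c' := by linarith
  -- choose R with mass > c'
  have htend : Filter.Tendsto (fun k : ℕ => ∫ y in ball (0:Rn n) k, |f y|)
      Filter.atTop (nhds I) := by
    have h1 := tendsto_setIntegral_of_monotone (μ := volume) (f := fun y => |f y|)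
      (fun i : ℕ => measurableSet_ball (x := (0:Rn n)) (ε := i))
      (fun i j hij => ball_subset_ball (by exact_mod_cast hij))
      (by rw [Metric.iUnion_ball_nat]; exact hf.abs.integrableOn)
    rwa [Metric.iUnion_ball_nat, setIntegral_univ] at h1
  obtain ⟨k, hk⟩ := (htend.eventually (eventually_gt_nhds hc'I)).exists
  set R : ℝ := max (k:ℝ) 1 with hR_def
  have hR0 : (0:ℝ) < R := lt_of_lt_of_le one_pos (le_max_right _ _)
  set A : ℝ := ∫ y in ball (0:Rn n) R, |f y| with hA_def
  have hA : c' < A := by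
    refine lt_of_lt_of_le hk (setIntegral_mono_set hf.abs.integrableOn ?_ ?_)
    · exact Filter.Eventually.of_forall fun y => abs_nonneg _
    · exact (ball_subset_ball (le_max_left _ _)).eventuallyLE
  have hA0 : 0 < A := lt_trans hc'0 hA
  -- theta and rho
  set θ : ℝ := (c / c') ^ (((n:ℝ) - s)⁻¹) with hθ_def
  have hθ0 : 0 < θ := Real.rpow_pos_of_pos (div_pos hc_pos hc'0) _
  have hθ1 : θ < 1 :=
    Real.rpow_lt_one (by positivity) ((div_lt_one hc'0).2 hcc') (by positivity)
  have h1θ : 0 < 1 - θ := by linarith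
  set ρ : ℝ := R / (1 - θ) with hρ_def
  have hρ0 : 0 < ρ := div_pos hR0 h1θ
  have hρR : ρ - R = θ * ρ := by
    rw [hρ_def]; field_simp; ring
  have hρR0 : 0 < ρ - R := by rw [hρR]; positivity
  have hRρ : R < ρ := by linarith
  -- lam
  set lam : ℝ := (ρ ^ n * vT) ^ (-(1 - s / (n:ℝ))) * A with hlam_def
  have hbase : 0 < ρ ^ n * vT := by positivity
  have hlam0 : 0 < lam := mul_pos (Real.rpow_pos_of_pos hbase _) hA0
  -- ball volume formula
  have hwf : ∀ (x : Rn n) (rad : ℝ), 0 < rad →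
      (volume (Metric.ball x rad)).toReal = rad ^ n * vT := by
    intro x rad hr
    rw [Measure.addHaar_ball_of_pos volume x hr, ENNReal.toReal_mul,
      ENNReal.toReal_ofReal (by positivity), finrank_euclideanSpace_fin, hvT_def]
  -- bad set is null
  set Bad : Set (Rn n) := {x | ¬ BddAbove (T x)} with hBad_def
  have hBadnull : volume Bad = 0 := by
    have hb : ∀ m : ℕ, volume Bad ≤ ENNReal.ofReal (4 ^ n * (I / ((m:ℝ) + 1)) ^ p) := by
      intro m
      have hm : (0:ℝ) < (m:ℝ) + 1 := by positivity
      refine le_trans (measure_mono ?_)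
        (le_trans (weak_bound n hn s hs0 hsn f hf _ hm) ?_)
      · intro x hx
        obtain ⟨e, he, hle⟩ := not_bddAbove_iff.1 hx ((m:ℝ) + 1)
        obtain ⟨rad, hrad, rfl⟩ := he
        exact ⟨rad, hrad, hle⟩
      · rw [← ENNReal.ofReal_div_of_pos hm,
          ENNReal.ofReal_rpow_of_nonneg (by positivity) hp0.le,
          ← ENNReal.ofReal_mul (by positivity)]
    have htz : Filter.Tendsto (fun m : ℕ => ENNReal.ofReal (4 ^ n * (I / ((m:ℝ) + 1)) ^ p))
        Filter.atTop (nhds 0) := by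
      rw [show (0:ℝ≥0∞) = ENNReal.ofReal ((4:ℝ) ^ n * 0) by simp]
      apply ENNReal.tendsto_ofReal
      apply Filter.Tendsto.const_mul
      have h0 : Filter.Tendsto (fun m : ℕ => I / ((m:ℝ) + 1)) Filter.atTop (nhds 0) := by
        have h1 := (tendsto_const_div_atTop_nhds_zero_nat I).comp
          (Filter.tendsto_add_atTop_nat 1)
        simpa [Function.comp_def] using h1
      have h2 := h0.rpow_const (Or.inr hp0.le)
      rwa [Real.zero_rpow hp0.ne'] at h2
    exact le_antisymm (ge_of_tendsto htz (Filter.Eventually.of_forall hb)) (zero_le)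
  -- pointwise lower bound on the good part of the small ball
  have hq'0 : 0 < 1 - s / (n:ℝ) := by rw [hq_eq]; exact hq0
  have hpoint : ball (0:Rn n) (ρ - R) \ Bad ⊆ {x : Rn n | lam < |fracMaximal n s f x|} := by
    rintro x ⟨hxball, hxgood⟩
    have hxbdd : BddAbove (T x) := by
      simpa [hBad_def] using hxgood
    simp only [mem_setOf_eq]
    have hxnorm : ‖x‖ < ρ - R := by simpa using hxball
    set rx : ℝ := ‖x‖ + R with hrx_def
    have hrx0 : 0 < rx := add_pos_of_nonneg_of_pos (norm_nonneg x) hR0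
    have hrxρ : rx < ρ := by rw [hrx_def]; linarith
    have hsubball : ball (0:Rn n) R ⊆ ball x rx := by
      intro y hy
      rw [mem_ball] at hy ⊢
      calc dist y x ≤ dist y 0 + dist 0 x := dist_triangle y 0 x
        _ = ‖y‖ + ‖x‖ := by rw [dist_zero_right, dist_zero_left]
        _ < R + ‖x‖ := by
            have : ‖y‖ < R := by rwa [← dist_zero_right]
            linarith
        _ = rx := by rw [hrx_def]; ring
    have hIax : A ≤ ∫ y in ball x rx, |f y| := by
      refine setIntegral_mono_set hf.abs.integrableOn ?_ hsubball.eventuallyLE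
      exact Filter.Eventually.of_forall fun y => abs_nonneg _
    have heT : ((volume (Metric.ball x rx)).toReal ^ (-(1 - s / (n:ℝ))) *
        ∫ y in Metric.ball x rx, |f y|) ∈ T x := ⟨rx, hrx0, rfl⟩
    have hwx : (volume (Metric.ball x rx)).toReal = rx ^ n * vT := hwf x rx hrx0
    have hmono : (ρ ^ n * vT) ^ (-(1 - s / (n:ℝ))) < (rx ^ n * vT) ^ (-(1 - s / (n:ℝ))) := by
      apply Real.rpow_lt_rpow_of_neg (by positivity) _ (by linarith)
      have : rx ^ n < ρ ^ n := pow_lt_pow_left₀ hrxρ hrx0.le (by omega)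
      exact mul_lt_mul_of_pos_right this hvT
    have hlam_lt : lam < (volume (Metric.ball x rx)).toReal ^ (-(1 - s / (n:ℝ))) *
        ∫ y in Metric.ball x rx, |f y| := by
      rw [hwx]
      calc lam = (ρ ^ n * vT) ^ (-(1 - s / (n:ℝ))) * A := rfl
        _ < (rx ^ n * vT) ^ (-(1 - s / (n:ℝ))) * A := mul_lt_mul_of_pos_right hmono hA0
        _ ≤ (rx ^ n * vT) ^ (-(1 - s / (n:ℝ))) * ∫ y in ball x rx, |f y| :=
            mul_le_mul_of_nonneg_left hIax (Real.rpow_nonneg (by positivity) _)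
    rw [abs_of_nonneg (hM_nonneg x), hM_eq x]
    exact lt_of_lt_of_le hlam_lt (le_csSup hxbdd heT)
  -- final comparison
  have hfin : volume {x : Rn n | lam < |fracMaximal n s f x|} ≠ ⊤ :=
    ne_top_of_le_ne_top ENNReal.ofReal_ne_top (hWB lam hlam0)
  have hvol_ge : volume (ball (0:Rn n) (ρ - R)) ≤
      volume {x : Rn n | lam < |fracMaximal n s f x|} := by
    conv_lhs => rw [← measure_diff_null hBadnull]
    exact measure_mono hpoint
  have hvol_toReal : (ρ - R) ^ n * vT ≤
      (volume {x : Rn n | lam < |fracMaximal n s f x|}).toReal := by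
    rw [← hwf 0 (ρ - R) hρR0]
    exact ENNReal.toReal_mono hfin hvol_ge
  have hmem : lam * (volume {x : Rn n | lam < |fracMaximal n s f x|}).toReal ^
      (((n : ℝ) - s) / (n : ℝ)) ∈ S := ⟨lam, hlam0, rfl⟩
  have hkey : c ≤ lam * (volume {x : Rn n | lam < |fracMaximal n s f x|}).toReal ^
      (((n : ℝ) - s) / (n : ℝ)) := by
    have h2 : ((ρ - R) ^ n * vT) ^ q ≤
        (volume {x : Rn n | lam < |fracMaximal n s f x|}).toReal ^ (((n : ℝ) - s) / (n : ℝ)) := by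
      rw [← hq_def]
      exact Real.rpow_le_rpow (by positivity) hvol_toReal hq0.le
    have h3 : ((θ * ρ) ^ n * vT) ^ q * (ρ ^ n * vT) ^ (-(1 - s / (n:ℝ))) = c / c' := by
      rw [hq_eq, Real.rpow_neg hbase.le, mul_pow, mul_assoc,
        Real.mul_rpow (by positivity) hbase.le, mul_assoc,
        mul_inv_cancel₀ (Real.rpow_pos_of_pos hbase q).ne', mul_one,
        ← Real.rpow_natCast θ n, ← Real.rpow_mul hθ0.le, hθ_def,
        ← Real.rpow_mul (by positivity)]
      have hexp : ((n:ℝ) - s)⁻¹ * ((n:ℝ) * q) = 1 := by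
        rw [hq_def]; field_simp
      rw [hexp, Real.rpow_one]
    have h4 : A * (c / c') = lam * (((ρ - R)) ^ n * vT) ^ q := by
      rw [hρR, hlam_def, ← h3]
      ring
    calc c = c' * (c / c') := by field_simp
      _ ≤ A * (c / c') := mul_le_mul_of_nonneg_right hA.le (by positivity)
      _ = lam * ((ρ - R) ^ n * vT) ^ q := h4
      _ ≤ lam * (volume {x : Rn n | lam < |fracMaximal n s f x|}).toReal ^
          (((n : ℝ) - s) / (n : ℝ)) := mul_le_mul_of_nonneg_left h2 hlam0.le
  have := le_trans hkey (le_csSup hSbdd hmem)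
  linarith
end
end

section
/- Let n ≥ 1 be an integer, 0 < s < n, x₀ ∈ ℝ^n, and let h : [0,∞) → [0,∞) be nonincreasing with f(x) = h(|x−x₀|) belonging to L^1(ℝ^n). Then ‖M_s f‖_{L^{n/(n−s),∞}(ℝ^n)} = ‖f‖_{L^1(ℝ^n)}. -/
open MeasureTheory Real Set
open scoped ENNReal

noncomputable section

namespace Statement8Aux

open Metric
open scoped RealInnerProductSpace

lemma rnNontrivial {n : ℕ} (hn : 1 ≤ n) : Nontrivial (Rn n) :=
  Module.nontrivial_of_finrank_pos (R := ℝ)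
    (by rw [finrank_euclideanSpace_fin]; omega)

lemma volBall {n : ℕ} (hn : 1 ≤ n) (x : Rn n) {r : ℝ} (hr : 0 ≤ r) :
    volume (Metric.ball x r) = ENNReal.ofReal (r ^ n) * volume (Metric.ball (0 : Rn n) 1) := by
  have := rnNontrivial hn
  rw [Measure.addHaar_ball volume x hr, finrank_euclideanSpace_fin]

lemma volClosedBall {n : ℕ} (x : Rn n) {r : ℝ} (hr : 0 ≤ r) :
    volume (Metric.closedBall x r)
      = ENNReal.ofReal (r ^ n) * volume (Metric.ball (0 : Rn n) 1) := by
  rw [Measure.addHaar_closedBall volume x hr, finrank_euclideanSpace_fin]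

lemma vN_pos (n : ℕ) : 0 < (volume (Metric.ball (0 : Rn n) 1)).toReal :=
  ENNReal.toReal_pos (measure_ball_pos volume 0 one_pos).ne' measure_ball_lt_top.ne

lemma volBall_toReal {n : ℕ} (hn : 1 ≤ n) (x : Rn n) {r : ℝ} (hr : 0 ≤ r) :
    (volume (Metric.ball x r)).toReal
      = r ^ n * (volume (Metric.ball (0 : Rn n) 1)).toReal := by
  rw [volBall hn x hr, ENNReal.toReal_mul, ENNReal.toReal_ofReal (by positivity)]

lemma lens_subset {E : Type*} [NormedAddCommGroup E] [InnerProductSpace ℝ E]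
    {x y : E} (hxy : x ≠ y) (r t : ℝ) :
    ∃ c : E, Metric.closedBall x r ∩ Metric.closedBall y t ⊆
      Metric.closedBall c (r * t / dist x y) := by
  set d : ℝ := dist x y with hdd
  have hd : 0 < d := dist_pos.2 hxy
  rcases lt_or_ge r 0 with hr | hr
  · exact ⟨x, by simp [Metric.closedBall_eq_empty.2 hr]⟩
  rcases lt_or_ge t 0 with ht | ht
  · exact ⟨x, by simp [Metric.closedBall_eq_empty.2 ht]⟩
  have hrt : 0 ≤ r * t / d := by positivity
  rcases le_or_gt (d ^ 2 + t ^ 2) (r ^ 2) with hc1 | hc1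
  · refine ⟨y, fun z hz => ?_⟩
    have hdr : d ≤ r := by nlinarith
    have hzy : dist z y ≤ t := hz.2
    have htrd : t ≤ r * t / d := by
      rw [le_div_iff₀ hd]; nlinarith
    exact mem_closedBall.2 (hzy.trans htrd)
  rcases le_or_gt (d ^ 2 + r ^ 2) (t ^ 2) with hc2 | hc2
  · refine ⟨x, fun z hz => ?_⟩
    have hdt : d ≤ t := by nlinarith
    have hzx : dist z x ≤ r := hz.1
    have hrrd : r ≤ r * t / d := by
      rw [le_div_iff₀ hd]; nlinarith
    exact mem_closedBall.2 (hzx.trans hrrd)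
  · set α : ℝ := (t ^ 2 + d ^ 2 - r ^ 2) / (2 * d ^ 2) with hα
    have hα0 : 0 ≤ α := by
      apply div_nonneg (by nlinarith) (by positivity)
    have hα1 : α ≤ 1 := by
      rw [hα, div_le_one (by positivity)]; nlinarith
    refine ⟨y + α • (x - y), fun z hz => ?_⟩
    set a : E := z - y with ha
    set w : E := x - y with hw
    have hnw : ‖w‖ = d := by rw [hw, hdd, dist_eq_norm, norm_sub_rev]
    have hna : ‖a‖ ≤ t := by rw [ha, ← dist_eq_norm]; exact hz.2
    have hnaw : ‖a - w‖ ≤ r := by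
      have : a - w = z - x := by rw [ha, hw]; abel
      rw [this, ← dist_eq_norm]; exact hz.1
    have key : ‖a - α • w‖ ^ 2 = ‖a‖ ^ 2 - 2 * α * ⟪a, w⟫ + α ^ 2 * d ^ 2 := by
      rw [norm_sub_sq_real, real_inner_smul_right, norm_smul, Real.norm_eq_abs,
        abs_of_nonneg hα0, mul_pow, hnw]
      ring
    have hinner : 2 * ⟪a, w⟫ = ‖a‖ ^ 2 + d ^ 2 - ‖a - w‖ ^ 2 := by
      have := norm_sub_sq_real a w
      rw [hnw] at this
      linarith
    have hsq : ‖a - α • w‖ ^ 2 ≤ (r * t / d) ^ 2 := by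
      rw [key]
      have e1 : ‖a‖ ^ 2 - 2 * α * ⟪a, w⟫ + α ^ 2 * d ^ 2
          = (1 - α) * ‖a‖ ^ 2 + α * ‖a - w‖ ^ 2 - α * d ^ 2 + α ^ 2 * d ^ 2 := by
        have h2 : 2 * α * ⟪a, w⟫ = α * (‖a‖ ^ 2 + d ^ 2 - ‖a - w‖ ^ 2) := by
          rw [mul_comm (2 : ℝ) α, mul_assoc, hinner]
        rw [h2]; ring
      rw [e1]
      have b1 : (1 - α) * ‖a‖ ^ 2 ≤ (1 - α) * t ^ 2 := by
        apply mul_le_mul_of_nonneg_left _ (by linarith)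
        nlinarith [norm_nonneg a]
      have b2 : α * ‖a - w‖ ^ 2 ≤ α * r ^ 2 := by
        apply mul_le_mul_of_nonneg_left _ hα0
        nlinarith [norm_nonneg (a - w)]
      have step : (1 - α) * ‖a‖ ^ 2 + α * ‖a - w‖ ^ 2 - α * d ^ 2 + α ^ 2 * d ^ 2
          ≤ (1 - α) * t ^ 2 + α * r ^ 2 - α * d ^ 2 + α ^ 2 * d ^ 2 := by linarith
      refine step.trans ?_
      have hαd : α * (2 * d ^ 2) = t ^ 2 + d ^ 2 - r ^ 2 := by
        rw [hα]; field_simp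
      have hrtd : (r * t / d) ^ 2 = r ^ 2 * t ^ 2 / d ^ 2 := by ring
      have hd2 : (0 : ℝ) < d ^ 2 := by positivity
      rw [hrtd, le_div_iff₀ hd2]
      nlinarith [sq_nonneg (t ^ 2 - d ^ 2 + r ^ 2), hαd, hd2]
    have hdz : dist z (y + α • w) = ‖a - α • w‖ := by
      rw [dist_eq_norm]; congr 1; rw [ha, hw]; abel
    rw [mem_closedBall, hdz]
    calc ‖a - α • w‖ = Real.sqrt (‖a - α • w‖ ^ 2) := by
          rw [Real.sqrt_sq (norm_nonneg _)]
      _ ≤ Real.sqrt ((r * t / d) ^ 2) := Real.sqrt_le_sqrt hsq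
      _ = r * t / d := Real.sqrt_sq hrt

section Main

variable {n : ℕ} {s : ℝ} {x₀ : Rn n} {h : ℝ → ℝ} {f : Rn n → ℝ}

/-- Key geometric-measure lemma: the superlevel sets of a radially decreasing function
intersected with a ball of radius `r` centered at distance `d` lose a factor `(r/d)^n`. -/
lemma levelcap (hn : 1 ≤ n) (hmono : AntitoneOn h (Ici 0))
    (hfdef : f = fun x => h ‖x - x₀‖)
    {x : Rn n} (hx : x ≠ x₀) {r : ℝ} (hr : 0 < r) (t : ℝ) :
    volume ({y : Rn n | t < f y} ∩ Metric.ball x r)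
      ≤ ENNReal.ofReal ((r / dist x x₀) ^ n) * volume {y : Rn n | t < f y} := by
  have hnt := rnNontrivial hn
  set d := dist x x₀ with hd'
  have hd : 0 < d := dist_pos.2 hx
  set S : Set ℝ := {u : ℝ | 0 ≤ u ∧ t < h u} with hS
  have hSlow : ∀ u ∈ S, ∀ v, 0 ≤ v → v ≤ u → v ∈ S := fun u hu v hv0 hvu =>
    ⟨hv0, hu.2.trans_le (hmono hv0 hu.1 hvu)⟩
  have hlev : ∀ y : Rn n, t < f y ↔ dist y x₀ ∈ S := by
    intro y
    rw [hfdef]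
    simp only [hS, mem_setOf_eq, dist_eq_norm]
    exact ⟨fun hy => ⟨norm_nonneg _, hy⟩, fun hy => hy.2⟩
  by_cases hbdd : BddAbove S
  · rcases eq_empty_or_nonempty S with hSe | hSne
    · have hempty : {y : Rn n | t < f y} = ∅ := by
        ext y; simp only [mem_setOf_eq, mem_empty_iff_false, iff_false]
        intro hy
        exact absurd ((hlev y).1 hy) (by rw [hSe]; exact notMem_empty _)
      simp [hempty]
    · set ρ := sSup S with hρ
      have hρ0 : 0 ≤ ρ := by
        obtain ⟨u, hu⟩ := hSne
        exact hu.1.trans (le_csSup hbdd hu)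
      have hsub1 : {y : Rn n | t < f y} ⊆ Metric.closedBall x₀ ρ := fun y hy =>
        mem_closedBall.2 (le_csSup hbdd ((hlev y).1 hy))
      have hsub2 : Metric.ball x₀ ρ ⊆ {y : Rn n | t < f y} := by
        intro y hy
        obtain ⟨u, hu, hlt⟩ := exists_lt_of_lt_csSup hSne (mem_ball.1 hy)
        exact (hlev y).2 (hSlow u hu _ dist_nonneg hlt.le)
      obtain ⟨c, hc⟩ := lens_subset hx r ρ
      have hprod : (r * ρ / d) ^ n = (r / d) ^ n * ρ ^ n := by
        rw [← mul_pow]; congr 1; ring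
      calc volume ({y : Rn n | t < f y} ∩ Metric.ball x r)
          ≤ volume (Metric.closedBall c (r * ρ / d)) := by
            apply measure_mono
            intro y hy
            exact hc ⟨ball_subset_closedBall hy.2, hsub1 hy.1⟩
        _ = ENNReal.ofReal ((r * ρ / d) ^ n) * volume (Metric.ball (0 : Rn n) 1) :=
            volClosedBall c (by positivity)
        _ = ENNReal.ofReal ((r / d) ^ n) *
              (ENNReal.ofReal (ρ ^ n) * volume (Metric.ball (0 : Rn n) 1)) := by
            rw [hprod, ENNReal.ofReal_mul (by positivity), mul_assoc]
        _ = ENNReal.ofReal ((r / d) ^ n) * volume (Metric.ball x₀ ρ) := by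
            rw [volBall hn x₀ hρ0]
        _ ≤ ENNReal.ofReal ((r / d) ^ n) * volume {y : Rn n | t < f y} :=
            mul_le_mul_right (measure_mono hsub2) _
  · have hdS : d ∈ S := by
      obtain ⟨u, hu, hlt⟩ := not_bddAbove_iff.1 hbdd d
      exact hSlow u hu d hd.le hlt.le
    have hsub : Metric.closedBall x₀ d ⊆ {y : Rn n | t < f y} := fun y hy =>
      (hlev y).2 (hSlow d hdS _ dist_nonneg (mem_closedBall.1 hy))
    have hprod : (r : ℝ) ^ n = (r / d) ^ n * d ^ n := by
      rw [← mul_pow]; congr 1; field_simp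
    calc volume ({y : Rn n | t < f y} ∩ Metric.ball x r)
        ≤ volume (Metric.ball x r) := measure_mono inter_subset_right
      _ = ENNReal.ofReal (r ^ n) * volume (Metric.ball (0 : Rn n) 1) := volBall hn x hr.le
      _ = ENNReal.ofReal ((r / d) ^ n) *
            (ENNReal.ofReal (d ^ n) * volume (Metric.ball (0 : Rn n) 1)) := by
          rw [hprod, ENNReal.ofReal_mul (by positivity), mul_assoc]
      _ = ENNReal.ofReal ((r / d) ^ n) * volume (Metric.closedBall x₀ d) := by
          rw [volClosedBall x₀ hd.le]
      _ ≤ ENNReal.ofReal ((r / d) ^ n) * volume {y : Rn n | t < f y} :=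
          mul_le_mul_right (measure_mono hsub) _

/-- Integral of a radially decreasing function over an off-center ball. -/
lemma integral_ball_le (hn : 1 ≤ n) (hh0 : ∀ t, 0 ≤ t → 0 ≤ h t)
    (hmono : AntitoneOn h (Ici 0)) (hfdef : f = fun x => h ‖x - x₀‖) (hf : Integrable f)
    {x : Rn n} (hx : x ≠ x₀) {r : ℝ} (hr : 0 < r) :
    ∫ y in Metric.ball x r, |f y| ≤ (r / dist x x₀) ^ n * ∫ y, |f y| := by
  have hf0 : ∀ y, 0 ≤ f y := fun y => by rw [hfdef]; exact hh0 _ (norm_nonneg _)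
  have habs : ∀ y : Rn n, |f y| = f y := fun y => abs_of_nonneg (hf0 y)
  simp only [habs]
  have hd : 0 < dist x x₀ := dist_pos.2 hx
  set d := dist x x₀
  have hC0 : (0 : ℝ) ≤ (r / d) ^ n := by positivity
  have hI0 : (0 : ℝ) ≤ ∫ y, f y := integral_nonneg hf0
  have hae : 0 ≤ᵐ[volume] f := Filter.Eventually.of_forall hf0
  have lhs_eq : ∫ y in Metric.ball x r, f y
      = (∫⁻ y in Metric.ball x r, ENNReal.ofReal (f y)).toReal :=
    integral_eq_lintegral_of_nonneg_ae (ae_restrict_of_ae hae)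
      hf.aestronglyMeasurable.restrict
  have lc1 : ∫⁻ y in Metric.ball x r, ENNReal.ofReal (f y)
      = ∫⁻ t in Ioi (0 : ℝ), (volume.restrict (Metric.ball x r)) {a : Rn n | t < f a} :=
    lintegral_eq_lintegral_meas_lt _ (ae_restrict_of_ae hae) hf.aemeasurable.restrict
  have lc2 : ∫⁻ y, ENNReal.ofReal (f y) = ∫⁻ t in Ioi (0 : ℝ), volume {a : Rn n | t < f a} :=
    lintegral_eq_lintegral_meas_lt _ hae hf.aemeasurable
  have rhs_eq : ENNReal.ofReal (∫ y, f y) = ∫⁻ y, ENNReal.ofReal (f y) :=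
    ofReal_integral_eq_lintegral_ofReal hf hae
  have step : ∫⁻ y in Metric.ball x r, ENNReal.ofReal (f y)
      ≤ ENNReal.ofReal ((r / d) ^ n * ∫ y, f y) := by
    rw [lc1]
    calc ∫⁻ t in Ioi (0 : ℝ), (volume.restrict (Metric.ball x r)) {a : Rn n | t < f a}
        ≤ ∫⁻ t in Ioi (0 : ℝ),
            ENNReal.ofReal ((r / d) ^ n) * volume {a : Rn n | t < f a} := by
          apply lintegral_mono
          intro t
          simp only []
          rw [Measure.restrict_apply' measurableSet_ball]
          exact levelcap hn hmono hfdef hx hr t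
      _ = ENNReal.ofReal ((r / d) ^ n) * ∫⁻ t in Ioi (0 : ℝ), volume {a : Rn n | t < f a} :=
          lintegral_const_mul' _ _ ENNReal.ofReal_ne_top
      _ = ENNReal.ofReal ((r / d) ^ n) * ENNReal.ofReal (∫ y, f y) := by
          rw [← lc2, ← rhs_eq]
      _ = ENNReal.ofReal ((r / d) ^ n * ∫ y, f y) := (ENNReal.ofReal_mul hC0).symm
  rw [lhs_eq]
  exact ENNReal.toReal_le_of_le_ofReal (mul_nonneg hC0 hI0) step

/-- Bound for elements of the defining set of the fractional maximal function at `x ≠ x₀`. -/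
lemma fracSet_le (hn : 1 ≤ n) (hs0 : 0 < s) (hsn : s < n)
    (hh0 : ∀ t, 0 ≤ t → 0 ≤ h t) (hmono : AntitoneOn h (Ici 0))
    (hfdef : f = fun x => h ‖x - x₀‖) (hf : Integrable f)
    {x : Rn n} (hx : x ≠ x₀) {c : ℝ}
    (hc : ∃ rad : ℝ, 0 < rad ∧
      c = (volume (Metric.ball x rad)).toReal ^ (-(1 - s / (n : ℝ))) *
        ∫ y in Metric.ball x rad, |f y|) :
    c ≤ ((dist x x₀) ^ n * (volume (Metric.ball (0 : Rn n) 1)).toReal)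
        ^ ((s - (n : ℝ)) / (n : ℝ)) * ∫ y, |f y| := by
  obtain ⟨rad, hrad, rfl⟩ := hc
  have hnR : (0 : ℝ) < n := by exact_mod_cast (by omega : 0 < n)
  set vN := (volume (Metric.ball (0 : Rn n) 1)).toReal with hvN'
  have hvN : 0 < vN := vN_pos n
  have hd : 0 < dist x x₀ := dist_pos.2 hx
  set d := dist x x₀ with hd'
  have hexp : -(1 - s / (n : ℝ)) = (s - (n : ℝ)) / (n : ℝ) := by field_simp; ring
  rw [volBall_toReal hn x hrad.le, hexp]
  set e := (s - (n : ℝ)) / (n : ℝ) with he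
  have he0 : e < 0 := div_neg_of_neg_of_pos (by linarith) hnR
  have hIabs0 : (0 : ℝ) ≤ ∫ y, |f y| := integral_nonneg fun y => abs_nonneg _
  have hbase : (0 : ℝ) < d ^ n * vN := by positivity
  rcases le_or_gt rad d with hrd | hrd
  · have h1 : ∫ y in Metric.ball x rad, |f y| ≤ (rad / d) ^ n * ∫ y, |f y| :=
      integral_ball_le hn hh0 hmono hfdef hf hx hrad
    set q := rad / d with hq
    have hq0 : 0 < q := by positivity
    have hq1 : q ≤ 1 := (div_le_one hd).2 hrd
    have key : (rad ^ n * vN) ^ e = (d ^ n * vN) ^ e * q ^ (s - (n : ℝ)) := by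
      have hradq : rad = q * d := by rw [hq]; field_simp
      rw [hradq, mul_pow, mul_assoc, Real.mul_rpow (by positivity) hbase.le,
        ← Real.rpow_natCast q n, ← Real.rpow_mul hq0.le]
      have hne : (n : ℝ) * e = s - n := by rw [he]; field_simp
      rw [hne, mul_comm]
    have hBC : q ^ (s - (n : ℝ)) * (q : ℝ) ^ (n : ℕ) = q ^ s := by
      rw [← Real.rpow_natCast q n, ← Real.rpow_add hq0]
      congr 1; ring
    calc (rad ^ n * vN) ^ e * ∫ y in Metric.ball x rad, |f y|
        ≤ (rad ^ n * vN) ^ e * ((rad / d) ^ n * ∫ y, |f y|) :=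
          mul_le_mul_of_nonneg_left h1 (Real.rpow_nonneg (by positivity) e)
      _ = (d ^ n * vN) ^ e * (q ^ s * ∫ y, |f y|) := by
          rw [key, ← hq]
          calc (d ^ n * vN) ^ e * q ^ (s - (n : ℝ)) * (q ^ (n : ℕ) * ∫ y, |f y|)
              = (d ^ n * vN) ^ e * ((q ^ (s - (n : ℝ)) * q ^ (n : ℕ)) * ∫ y, |f y|) := by
                ring
            _ = (d ^ n * vN) ^ e * (q ^ s * ∫ y, |f y|) := by rw [hBC]
      _ ≤ (d ^ n * vN) ^ e * (1 * ∫ y, |f y|) := by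
          apply mul_le_mul_of_nonneg_left _ (Real.rpow_nonneg hbase.le e)
          exact mul_le_mul_of_nonneg_right (Real.rpow_le_one hq0.le hq1 hs0.le) hIabs0
      _ = (d ^ n * vN) ^ e * ∫ y, |f y| := by rw [one_mul]
  · have h1 : ∫ y in Metric.ball x rad, |f y| ≤ ∫ y, |f y| :=
      setIntegral_le_integral hf.abs (Filter.Eventually.of_forall fun y => abs_nonneg _)
    have h2 : (rad ^ n * vN) ^ e ≤ (d ^ n * vN) ^ e := by
      apply Real.rpow_le_rpow_of_nonpos hbase _ he0.le
      exact mul_le_mul_of_nonneg_right (pow_le_pow_left₀ hd.le hrd.le n) hvN.le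
    exact mul_le_mul h2 h1 (integral_nonneg fun y => abs_nonneg _)
      (Real.rpow_nonneg hbase.le e)

lemma fracMax_nonneg (n : ℕ) (s : ℝ) (g : Rn n → ℝ) (x : Rn n) :
    0 ≤ fracMaximal n s g x := by
  apply Real.sSup_nonneg
  rintro c ⟨rad, hrad, rfl⟩
  exact mul_nonneg (Real.rpow_nonneg ENNReal.toReal_nonneg _)
    (integral_nonneg fun y => abs_nonneg _)

lemma fracMax_le (hn : 1 ≤ n) (hs0 : 0 < s) (hsn : s < n)
    (hh0 : ∀ t, 0 ≤ t → 0 ≤ h t) (hmono : AntitoneOn h (Ici 0))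
    (hfdef : f = fun x => h ‖x - x₀‖) (hf : Integrable f)
    {x : Rn n} (hx : x ≠ x₀) :
    fracMaximal n s f x ≤ ((dist x x₀) ^ n * (volume (Metric.ball (0 : Rn n) 1)).toReal)
        ^ ((s - (n : ℝ)) / (n : ℝ)) * ∫ y, |f y| := by
  apply Real.sSup_le (fun c hc => fracSet_le hn hs0 hsn hh0 hmono hfdef hf hx hc)
  exact mul_nonneg (Real.rpow_nonneg (by positivity) _)
    (integral_nonneg fun y => abs_nonneg _)

/-- Superlevel sets of the maximal function are contained in balls of controlled volume. -/
lemma vol_level_le (hn : 1 ≤ n) (hs0 : 0 < s) (hsn : s < n)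
    (hh0 : ∀ t, 0 ≤ t → 0 ≤ h t) (hmono : AntitoneOn h (Ici 0))
    (hfdef : f = fun x => h ‖x - x₀‖) (hf : Integrable f)
    {lam : ℝ} (hlam : 0 < lam) (hI : 0 < ∫ y, |f y|) :
    volume {x : Rn n | lam < |fracMaximal n s f x|}
      ≤ ENNReal.ofReal (((∫ y, |f y|) / lam) ^ ((n : ℝ) / ((n : ℝ) - s))) := by
  set I := ∫ y : Rn n, |f y| with hI'
  set vN := (volume (Metric.ball (0 : Rn n) 1)).toReal with hvN'
  have hvN : 0 < vN := vN_pos n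
  have hnR : (0 : ℝ) < n := by exact_mod_cast (by omega : 0 < n)
  have hns : (0 : ℝ) < (n : ℝ) - s := by linarith
  set X := (I / lam) ^ ((n : ℝ) / ((n : ℝ) - s)) with hX'
  have hX : 0 < X := Real.rpow_pos_of_pos (by positivity) _
  set R := (X / vN) ^ (1 / (n : ℝ)) with hR'
  have hR : 0 < R := Real.rpow_pos_of_pos (by positivity) _
  have hnt := rnNontrivial hn
  have hsub : {x : Rn n | lam < |fracMaximal n s f x|} ⊆ insert x₀ (Metric.ball x₀ R) := by
    intro x hx
    rcases eq_or_ne x x₀ with rfl | hxne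
    · exact mem_insert _ _
    have hub := fracMax_le hn hs0 hsn hh0 hmono hfdef hf hxne
    have hd : 0 < dist x x₀ := dist_pos.2 hxne
    set d := dist x x₀ with hd'
    have hlt : lam < (d ^ n * vN) ^ ((s - (n : ℝ)) / (n : ℝ)) * I := by
      have hx' : lam < |fracMaximal n s f x| := hx
      rw [abs_of_nonneg (fracMax_nonneg n s f x)] at hx'
      exact hx'.trans_le hub
    set em := ((n : ℝ) - s) / (n : ℝ) with hem
    have hem0 : 0 < em := by positivity
    have hbase : (0 : ℝ) < d ^ n * vN := by positivity
    have hBpos : 0 < (d ^ n * vN) ^ em := Real.rpow_pos_of_pos hbase _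
    have hneg : (s - (n : ℝ)) / (n : ℝ) = -em := by rw [hem]; ring
    rw [hneg, Real.rpow_neg hbase.le] at hlt
    have h2 : lam < I / (d ^ n * vN) ^ em := by rwa [inv_mul_eq_div] at hlt
    have h3 : lam * (d ^ n * vN) ^ em < I := (lt_div_iff₀ hBpos).1 h2
    have h1 : (d ^ n * vN) ^ em < I / lam := (lt_div_iff₀ hlam).2 (by rwa [mul_comm] at h3)
    have h4 : d ^ n * vN < X := by
      have h5 := Real.rpow_lt_rpow (Real.rpow_nonneg hbase.le em) h1
        (by positivity : (0 : ℝ) < (n : ℝ) / ((n : ℝ) - s))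
      have hemq : em * ((n : ℝ) / ((n : ℝ) - s)) = 1 := by rw [hem]; field_simp
      rwa [← Real.rpow_mul hbase.le, hemq, Real.rpow_one] at h5
    have h6 : d ^ n < X / vN := (lt_div_iff₀ hvN).2 h4
    have h7 : d < R := by
      have h8 := Real.rpow_lt_rpow (by positivity : (0 : ℝ) ≤ d ^ n) h6
        (by positivity : (0 : ℝ) < 1 / (n : ℝ))
      rwa [← Real.rpow_natCast d n, ← Real.rpow_mul hd.le, mul_one_div,
        div_self hnR.ne', Real.rpow_one] at h8
    exact mem_insert_iff.2 (Or.inr (Metric.mem_ball.2 h7))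
  calc volume {x : Rn n | lam < |fracMaximal n s f x|}
      ≤ volume ({x₀} ∪ Metric.ball x₀ R) := by
        rw [← singleton_union] at hsub
        exact measure_mono hsub
    _ ≤ volume {x₀} + volume (Metric.ball x₀ R) := measure_union_le _ _
    _ = ENNReal.ofReal (R ^ n) * volume (Metric.ball (0 : Rn n) 1) := by
        rw [measure_singleton, zero_add, volBall hn x₀ hR.le]
    _ = ENNReal.ofReal X := by
        have hRn : R ^ n = X / vN := by
          rw [hR', ← Real.rpow_natCast _ n, ← Real.rpow_mul (by positivity),
            one_div, inv_mul_cancel₀ hnR.ne', Real.rpow_one]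
        rw [hRn, show volume (Metric.ball (0 : Rn n) 1) = ENNReal.ofReal vN from
          (ENNReal.ofReal_toReal measure_ball_lt_top.ne).symm,
          ← ENNReal.ofReal_mul (by positivity), div_mul_cancel₀ _ hvN.ne']

end Main

end Statement8Aux

open Statement8Aux Topology

theorem statement8 (n : ℕ) (hn : 1 ≤ n) (s : ℝ) (hs0 : 0 < s) (hsn : s < n)
    (x₀ : Rn n) (h : ℝ → ℝ) (hh0 : ∀ t, 0 ≤ t → 0 ≤ h t)
    (hmono : AntitoneOn h (Ici 0))
    (f : Rn n → ℝ) (hfdef : f = fun x => h ‖x - x₀‖) (hf : Integrable f) :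
    weakNorm n s (fracMaximal n s f) = ∫ x, |f x| := by
  classical
  have hnt := rnNontrivial hn
  set I := ∫ x : Rn n, |f x| with hI'
  have hI0 : 0 ≤ I := integral_nonneg fun y => abs_nonneg _
  have hnR : (0 : ℝ) < n := by exact_mod_cast (by omega : 0 < n)
  have hns : (0 : ℝ) < (n : ℝ) - s := by linarith
  have hem0 : 0 < ((n : ℝ) - s) / (n : ℝ) := by positivity
  set vN := (volume (Metric.ball (0 : Rn n) 1)).toReal with hvN'
  have hvN : 0 < vN := vN_pos n
  have hexp : ∀ x : Rn n, ∀ rad : ℝ, 0 ≤ rad →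
      (volume (Metric.ball x rad)).toReal ^ (-(1 - s / (n : ℝ)))
        = (rad ^ n * vN) ^ ((s - (n : ℝ)) / (n : ℝ)) := by
    intro x rad hrad
    rw [volBall_toReal hn x hrad]
    congr 1
    field_simp
    ring
  rcases eq_or_lt_of_le hI0 with hIz | hIpos
  · -- degenerate case `∫ |f| = 0`
    have hzeroint : ∀ (x : Rn n) (rad : ℝ), ∫ y in Metric.ball x rad, |f y| = 0 := by
      intro x rad
      refine le_antisymm ?_ (integral_nonneg fun y => abs_nonneg _)
      calc ∫ y in Metric.ball x rad, |f y| ≤ ∫ y, |f y| :=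
            setIntegral_le_integral hf.abs (Filter.Eventually.of_forall fun y => abs_nonneg _)
        _ = 0 := hIz.symm
    have hM : ∀ x, fracMaximal n s f x = 0 := by
      intro x
      unfold fracMaximal
      have hset : {c : ℝ | ∃ rad : ℝ, 0 < rad ∧
          c = (volume (Metric.ball x rad)).toReal ^ (-(1 - s / (n : ℝ))) *
            ∫ y in Metric.ball x rad, |f y|} = {0} := by
        ext c
        simp only [mem_setOf_eq, mem_singleton_iff]
        constructor
        · rintro ⟨rad, hrad, rfl⟩
          rw [hzeroint, mul_zero]
        · rintro rfl
          exact ⟨1, one_pos, by rw [hzeroint, mul_zero]⟩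
      rw [hset, csSup_singleton]
    unfold weakNorm
    have hset2 : {c : ℝ | ∃ lam : ℝ, 0 < lam ∧
        c = lam * (volume {x : Rn n | lam < |fracMaximal n s f x|}).toReal
          ^ (((n : ℝ) - s) / (n : ℝ))} = {0} := by
      have hzero : ∀ lam : ℝ, 0 < lam →
          lam * (volume {x : Rn n | lam < |fracMaximal n s f x|}).toReal
            ^ (((n : ℝ) - s) / (n : ℝ)) = 0 := by
        intro lam hlam
        have hempty : {x : Rn n | lam < |fracMaximal n s f x|} = ∅ := by
          ext x
          simp only [mem_setOf_eq, hM x, abs_zero, mem_empty_iff_false, iff_false, not_lt]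
          exact hlam.le
        rw [hempty, measure_empty, ENNReal.toReal_zero, Real.zero_rpow hem0.ne', mul_zero]
      ext c
      simp only [mem_setOf_eq, mem_singleton_iff]
      constructor
      · rintro ⟨lam, hlam, rfl⟩
        exact hzero lam hlam
      · rintro rfl
        exact ⟨1, one_pos, (hzero 1 one_pos).symm⟩
    rw [hset2, csSup_singleton]
    exact hIz
  · -- main case `∫ |f| > 0`
    have hwne : Set.Nonempty {c : ℝ | ∃ lam : ℝ, 0 < lam ∧
        c = lam * (volume {x : Rn n | lam < |fracMaximal n s f x|}).toReal
          ^ (((n : ℝ) - s) / (n : ℝ))} := ⟨_, ⟨1, one_pos, rfl⟩⟩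
    have hub : ∀ c ∈ {c : ℝ | ∃ lam : ℝ, 0 < lam ∧
        c = lam * (volume {x : Rn n | lam < |fracMaximal n s f x|}).toReal
          ^ (((n : ℝ) - s) / (n : ℝ))}, c ≤ I := by
      rintro c ⟨lam, hlam, rfl⟩
      have hv := vol_level_le hn hs0 hsn hh0 hmono hfdef hf hlam hIpos
      have hfin : volume {x : Rn n | lam < |fracMaximal n s f x|} ≠ ⊤ :=
        (hv.trans_lt ENNReal.ofReal_lt_top).ne
      have ht : (volume {x : Rn n | lam < |fracMaximal n s f x|}).toReal
          ≤ (I / lam) ^ ((n : ℝ) / ((n : ℝ) - s)) := by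
        calc (volume {x : Rn n | lam < |fracMaximal n s f x|}).toReal
            ≤ (ENNReal.ofReal ((I / lam) ^ ((n : ℝ) / ((n : ℝ) - s)))).toReal :=
              (ENNReal.toReal_le_toReal hfin ENNReal.ofReal_ne_top).2 hv
          _ = (I / lam) ^ ((n : ℝ) / ((n : ℝ) - s)) :=
              ENNReal.toReal_ofReal (by positivity)
      calc lam * (volume {x : Rn n | lam < |fracMaximal n s f x|}).toReal
            ^ (((n : ℝ) - s) / (n : ℝ))
          ≤ lam * ((I / lam) ^ ((n : ℝ) / ((n : ℝ) - s))) ^ (((n : ℝ) - s) / (n : ℝ)) :=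
            mul_le_mul_of_nonneg_left
              (Real.rpow_le_rpow ENNReal.toReal_nonneg ht hem0.le) hlam.le
        _ = I := by
            rw [← Real.rpow_mul (by positivity : (0 : ℝ) ≤ I / lam)]
            have hone : (n : ℝ) / ((n : ℝ) - s) * (((n : ℝ) - s) / (n : ℝ)) = 1 := by
              field_simp
            rw [hone, Real.rpow_one]
            field_simp
    apply le_antisymm
    · unfold weakNorm
      exact csSup_le hwne hub
    · unfold weakNorm
      apply le_of_forall_pos_le_add
      intro ε hε
      -- choose a large ball capturing most of the mass
      have T0 : Filter.Tendsto (fun i : ℕ => ∫ y in Metric.ball x₀ ((i : ℝ) + 1), |f y|)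
          Filter.atTop (𝓝 I) := by
        have hmeas : ∀ i : ℕ, MeasurableSet (Metric.ball x₀ ((i : ℝ) + 1)) := fun i =>
          measurableSet_ball
        have hmon : Monotone fun i : ℕ => Metric.ball x₀ ((i : ℝ) + 1) := by
          intro i j hij
          apply Metric.ball_subset_ball
          have : (i : ℝ) ≤ j := Nat.cast_le.2 hij
          linarith
        have hun : ⋃ i : ℕ, Metric.ball x₀ ((i : ℝ) + 1) = univ := by
          ext y
          simp only [mem_iUnion, Metric.mem_ball, mem_univ, iff_true]
          obtain ⟨i, hi⟩ := exists_nat_gt (dist y x₀)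
          exact ⟨i, by linarith⟩
        have := MeasureTheory.tendsto_setIntegral_of_monotone hmeas hmon
          (by rw [hun]; exact hf.abs.integrableOn)
        rwa [hun, setIntegral_univ] at this
      set δ := min (ε / 2) (I / 2) with hδ'
      have hδ : 0 < δ := lt_min (by linarith) (by linarith)
      obtain ⟨i, hi⟩ := (T0.eventually (eventually_gt_nhds (by linarith : I - δ < I))).exists
      set R := (i : ℝ) + 1 with hR'
      have hR : 0 < R := by positivity
      set m := ∫ y in Metric.ball x₀ R, |f y| with hm'
      have hm1 : I - δ < m := hi
      have hm0 : 0 < m := by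
        have h2 : δ ≤ I / 2 := min_le_right _ _
        linarith
      -- choose D large
      have T1 : Filter.Tendsto (fun D : ℝ => D / (D + R)) Filter.atTop (𝓝 1) := by
        have Ta : Filter.Tendsto (fun D : ℝ => R / (D + R)) Filter.atTop (𝓝 0) :=
          Filter.Tendsto.div_atTop tendsto_const_nhds
            (Filter.tendsto_atTop_add_const_right _ R Filter.tendsto_id)
        have Tb : Filter.Tendsto (fun D : ℝ => 1 - R / (D + R)) Filter.atTop (𝓝 1) := by
          have := (tendsto_const_nhds (α := ℝ) (x := (1:ℝ)) (f := Filter.atTop (α := ℝ))).sub Ta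
          rwa [sub_zero] at this
        apply Tb.congr'
        filter_upwards [Filter.eventually_gt_atTop 0] with D hD
        have hDR : D + R ≠ 0 := by positivity
        field_simp
        ring
      have T2 : Filter.Tendsto (fun D : ℝ => (D / (D + R)) ^ ((n : ℝ) - s) * m)
          Filter.atTop (𝓝 m) := by
        have Tc := (Real.continuousAt_rpow_const 1 ((n : ℝ) - s)
          (Or.inl one_ne_zero)).tendsto.comp T1
        simp only [Function.comp_def, Real.one_rpow] at Tc
        simpa using Tc.mul_const m
      obtain ⟨D, hDv, hD1⟩ := ((T2.eventually (eventually_gt_nhds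
        (by linarith [min_le_left (ε / 2) (I / 2)] : I - ε < m))).and
        (Filter.eventually_ge_atTop 1)).exists
      have hD0 : 0 < D := by linarith
      -- the element of the weak-norm set associated to D
      set lam := ((D + R) ^ n * vN) ^ ((s - (n : ℝ)) / (n : ℝ)) * m with hlam'
      have hbaseD : (0 : ℝ) < (D + R) ^ n * vN := by positivity
      have hlam : 0 < lam := mul_pos (Real.rpow_pos_of_pos hbaseD _) hm0
      have he0 : (s - (n : ℝ)) / (n : ℝ) < 0 := div_neg_of_neg_of_pos (by linarith) hnR
      have hsub : Metric.ball x₀ D \ {x₀} ⊆ {x : Rn n | lam < |fracMaximal n s f x|} := by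
        rintro x ⟨hxD, hxs⟩
        have hxne : x ≠ x₀ := by simpa using hxs
        have hd : 0 < dist x x₀ := dist_pos.2 hxne
        set dd := dist x x₀ with hdd'
        have hddD : dd < D := Metric.mem_ball.1 hxD
        have hmem : (volume (Metric.ball x (dd + R))).toReal ^ (-(1 - s / (n : ℝ))) *
            ∫ y in Metric.ball x (dd + R), |f y| ∈ {c : ℝ | ∃ rad : ℝ, 0 < rad ∧
              c = (volume (Metric.ball x rad)).toReal ^ (-(1 - s / (n : ℝ))) *
                ∫ y in Metric.ball x rad, |f y|} := ⟨dd + R, by positivity, rfl⟩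
        have hbddA : BddAbove {c : ℝ | ∃ rad : ℝ, 0 < rad ∧
            c = (volume (Metric.ball x rad)).toReal ^ (-(1 - s / (n : ℝ))) *
              ∫ y in Metric.ball x rad, |f y|} :=
          ⟨_, fun c hc => fracSet_le hn hs0 hsn hh0 hmono hfdef hf hxne hc⟩
        have hle := le_csSup hbddA hmem
        have hint : m ≤ ∫ y in Metric.ball x (dd + R), |f y| := by
          apply setIntegral_mono_set hf.abs.integrableOn
            (Filter.Eventually.of_forall fun y => abs_nonneg _)
          apply HasSubset.Subset.eventuallyLE
          apply Metric.ball_subset_ball'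
          rw [dist_comm, add_comm]
        have helem : lam < (volume (Metric.ball x (dd + R))).toReal ^ (-(1 - s / (n : ℝ))) *
            ∫ y in Metric.ball x (dd + R), |f y| := by
          rw [hexp x (dd + R) (by positivity)]
          have hstrict : ((D + R) ^ n * vN) ^ ((s - (n : ℝ)) / (n : ℝ))
              < ((dd + R) ^ n * vN) ^ ((s - (n : ℝ)) / (n : ℝ)) := by
            apply Real.rpow_lt_rpow_of_neg (by positivity) _ he0
            exact mul_lt_mul_of_pos_right
              (pow_lt_pow_left₀ (by linarith) (by positivity) (by omega)) hvN
          calc lam = ((D + R) ^ n * vN) ^ ((s - (n : ℝ)) / (n : ℝ)) * m := rfl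
            _ < ((dd + R) ^ n * vN) ^ ((s - (n : ℝ)) / (n : ℝ)) * m :=
                mul_lt_mul_of_pos_right hstrict hm0
            _ ≤ ((dd + R) ^ n * vN) ^ ((s - (n : ℝ)) / (n : ℝ)) *
                ∫ y in Metric.ball x (dd + R), |f y| :=
                mul_le_mul_of_nonneg_left hint (Real.rpow_nonneg (by positivity) _)
        show lam < |fracMaximal n s f x|
        rw [abs_of_nonneg (fracMax_nonneg n s f x)]
        exact helem.trans_le hle
      have hvol : ENNReal.ofReal (D ^ n) * volume (Metric.ball (0 : Rn n) 1)
          ≤ volume {x : Rn n | lam < |fracMaximal n s f x|} := by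
        calc ENNReal.ofReal (D ^ n) * volume (Metric.ball (0 : Rn n) 1)
            = volume (Metric.ball x₀ D) := (volBall hn x₀ hD0.le).symm
          _ = volume (Metric.ball x₀ D \ {x₀}) :=
              (measure_diff_null (measure_singleton x₀)).symm
          _ ≤ _ := measure_mono hsub
      have hvfin : volume {x : Rn n | lam < |fracMaximal n s f x|} ≠ ⊤ :=
        ((vol_level_le hn hs0 hsn hh0 hmono hfdef hf hlam hIpos).trans_lt
          ENNReal.ofReal_lt_top).ne
      have htR : D ^ n * vN ≤ (volume {x : Rn n | lam < |fracMaximal n s f x|}).toReal := by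
        have h9 := (ENNReal.toReal_le_toReal
          (ENNReal.mul_ne_top ENNReal.ofReal_ne_top measure_ball_lt_top.ne) hvfin).2 hvol
        rwa [ENNReal.toReal_mul, ENNReal.toReal_ofReal (by positivity)] at h9
      have hcmem : lam * (volume {x : Rn n | lam < |fracMaximal n s f x|}).toReal
          ^ (((n : ℝ) - s) / (n : ℝ)) ∈ {c : ℝ | ∃ lam : ℝ, 0 < lam ∧
            c = lam * (volume {x : Rn n | lam < |fracMaximal n s f x|}).toReal
              ^ (((n : ℝ) - s) / (n : ℝ))} := ⟨lam, hlam, rfl⟩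
      have hWbdd : BddAbove {c : ℝ | ∃ lam : ℝ, 0 < lam ∧
          c = lam * (volume {x : Rn n | lam < |fracMaximal n s f x|}).toReal
            ^ (((n : ℝ) - s) / (n : ℝ))} := ⟨I, hub⟩
      have hWge := le_csSup hWbdd hcmem
      have hE : lam * (D ^ n * vN) ^ (((n : ℝ) - s) / (n : ℝ))
          = (D / (D + R)) ^ ((n : ℝ) - s) * m := by
        rw [hlam']
        have e1 : ((D + R) ^ n * vN) ^ ((s - (n : ℝ)) / (n : ℝ))
            = (((D + R) ^ n * vN) ^ (((n : ℝ) - s) / (n : ℝ)))⁻¹ := by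
          rw [← Real.rpow_neg hbaseD.le]
          congr 1; ring
        have e2 : (D ^ n * vN) / ((D + R) ^ n * vN) = (D / (D + R)) ^ n := by
          rw [mul_div_mul_right _ _ hvN.ne', div_pow]
        have e3 : (((D + R) ^ n * vN) ^ (((n : ℝ) - s) / (n : ℝ)))⁻¹ * m *
            (D ^ n * vN) ^ (((n : ℝ) - s) / (n : ℝ))
            = ((D ^ n * vN) / ((D + R) ^ n * vN)) ^ (((n : ℝ) - s) / (n : ℝ)) * m := by
          rw [Real.div_rpow (by positivity) hbaseD.le]
          ring
        have e4 : (n : ℝ) * (((n : ℝ) - s) / (n : ℝ)) = (n : ℝ) - s := by field_simp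
        rw [e1, e3, e2, ← Real.rpow_natCast (D / (D + R)) n,
          ← Real.rpow_mul (by positivity), e4]
      have hElow : (D / (D + R)) ^ ((n : ℝ) - s) * m
          ≤ lam * (volume {x : Rn n | lam < |fracMaximal n s f x|}).toReal
            ^ (((n : ℝ) - s) / (n : ℝ)) := by
        rw [← hE]
        exact mul_le_mul_of_nonneg_left
          (Real.rpow_le_rpow (by positivity) htR hem0.le) hlam.le
      linarith [hElow.trans hWge]
end
end

section
/- Let n ≥ 1 be an integer, 0 < s < n, and f ∈ L^1(ℝ^n). Then ‖I_s f‖_{L^{n/(n−s),∞}(ℝ^n)} ≤ γ_s v_n^{(n−s)/n} (n/s) ‖f‖_{L^1(ℝ^n)}. -/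
open MeasureTheory Real Set
open scoped ENNReal

noncomputable section

lemma aux_nontrivial {n : ℕ} (hn : 1 ≤ n) : Nontrivial (Rn n) :=
  Module.nontrivial_of_finrank_pos (R := ℝ) (by rw [finrank_euclideanSpace_fin]; omega)

lemma aux_vol_pos (n : ℕ) : 0 < unitBallVol n :=
  ENNReal.toReal_pos (Metric.measure_ball_pos volume (0:Rn n) one_pos).ne' measure_ball_lt_top.ne

lemma aux_ball1 (n : ℕ) :
    volume (Metric.ball (0 : Rn n) 1) = ENNReal.ofReal (unitBallVol n) :=
  (ENNReal.ofReal_toReal measure_ball_lt_top.ne).symm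

lemma aux_ballK {n : ℕ} (hn : 1 ≤ n) {s : ℝ} (hs0 : 0 < s) (hsn : s < n) {R : ℝ} (hR : 0 < R) :
    ∫⁻ x in Metric.ball (0 : Rn n) R, ENNReal.ofReal (‖x‖ ^ (s - (n : ℝ))) ≤
      ENNReal.ofReal ((n : ℝ) / s * unitBallVol n * R ^ s) := by
  haveI : Nontrivial (Rn n) := aux_nontrivial hn
  have hn0 : (0:ℝ) < (n:ℝ) := by
    have : (1:ℝ) ≤ (n:ℝ) := by exact_mod_cast hn
    linarith
  have hsn' : s - (n:ℝ) < 0 := by linarith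
  have hv0 := aux_vol_pos n
  set a := R ^ (s - (n:ℝ)) with ha
  have ha0 : 0 < a := Real.rpow_pos_of_pos hR _
  have hmeas : Measurable fun x : Rn n => ‖x‖ ^ (s - (n:ℝ)) :=
    measurable_norm.pow measurable_const
  rw [lintegral_eq_lintegral_meas_le _ (Filter.Eventually.of_forall fun x =>
    Real.rpow_nonneg (norm_nonneg x) _) hmeas.aemeasurable]
  set μB := (volume : Measure (Rn n)).restrict (Metric.ball (0 : Rn n) R) with hμB
  have hpiece1 : ∫⁻ t in Ioc (0:ℝ) a, μB {x | t ≤ ‖x‖ ^ (s - (n:ℝ))} ≤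
      ENNReal.ofReal (unitBallVol n * R ^ s) := by
    have hRa : (R:ℝ) ^ (n:ℕ) * a = R ^ s := by
      rw [ha, ← Real.rpow_natCast R n, ← Real.rpow_add hR]
      congr 1; ring
    have hb : ∀ t ∈ Ioc (0:ℝ) a, μB {x | t ≤ ‖x‖ ^ (s - (n:ℝ))} ≤
        ENNReal.ofReal (R ^ (n:ℕ) * unitBallVol n) := by
      intro t _
      calc μB {x | t ≤ ‖x‖ ^ (s - (n:ℝ))} ≤ μB univ := measure_mono (subset_univ _)
        _ = volume (Metric.ball (0 : Rn n) R) := by rw [hμB, Measure.restrict_apply_univ]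
        _ = ENNReal.ofReal (R ^ (n:ℕ) * unitBallVol n) := by
            rw [Measure.addHaar_ball volume _ hR.le, finrank_euclideanSpace_fin, aux_ball1,
              ← ENNReal.ofReal_mul (by positivity)]
    calc ∫⁻ t in Ioc (0:ℝ) a, μB {x | t ≤ ‖x‖ ^ (s - (n:ℝ))}
        ≤ ∫⁻ _t in Ioc (0:ℝ) a, ENNReal.ofReal (R ^ (n:ℕ) * unitBallVol n) :=
          setLIntegral_mono' measurableSet_Ioc hb
      _ = ENNReal.ofReal (R ^ (n:ℕ) * unitBallVol n) * volume (Ioc (0:ℝ) a) :=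
          setLIntegral_const _ _
      _ = ENNReal.ofReal (unitBallVol n * R ^ s) := by
          rw [Real.volume_Ioc, sub_zero, ← ENNReal.ofReal_mul (by positivity)]
          congr 1
          rw [← hRa]; ring
  set p := (n:ℝ) / (s - (n:ℝ)) with hp
  have hplt : p < -1 := by
    rw [hp, div_lt_iff_of_neg (by linarith)]
    linarith
  have hsub : ∀ t : ℝ, 0 < t → {x : Rn n | t ≤ ‖x‖ ^ (s - (n:ℝ))} ⊆
      Metric.closedBall (0 : Rn n) (t ^ (s - (n:ℝ))⁻¹) := by
    intro t ht x hx
    simp only [mem_setOf_eq] at hx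
    have hxpos : 0 < ‖x‖ := by
      rcases eq_or_lt_of_le (norm_nonneg x) with h | h
      · exfalso
        rw [← h, Real.zero_rpow hsn'.ne] at hx
        linarith
      · exact h
    have h2 := Real.rpow_le_rpow_of_nonpos ht hx (inv_nonpos.mpr hsn'.le)
    rw [← Real.rpow_mul (norm_nonneg x), mul_inv_cancel₀ hsn'.ne, Real.rpow_one] at h2
    exact Metric.mem_closedBall.mpr (by rwa [dist_zero_right])
  have hpiece2 : ∫⁻ t in Ioi a, μB {x | t ≤ ‖x‖ ^ (s - (n:ℝ))} ≤
      ENNReal.ofReal (((n:ℝ) - s) / s * (unitBallVol n * R ^ s)) := by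
    have hb : ∀ t ∈ Ioi a, μB {x | t ≤ ‖x‖ ^ (s - (n:ℝ))} ≤
        ENNReal.ofReal (unitBallVol n * t ^ p) := by
      intro t ht
      have ht0 : 0 < t := ha0.trans ht
      calc μB {x | t ≤ ‖x‖ ^ (s - (n:ℝ))}
          ≤ volume {x : Rn n | t ≤ ‖x‖ ^ (s - (n:ℝ))} :=
            Measure.le_iff'.1 Measure.restrict_le_self _
        _ ≤ volume (Metric.closedBall (0 : Rn n) (t ^ (s - (n:ℝ))⁻¹)) :=
            measure_mono (hsub t ht0)
        _ = ENNReal.ofReal ((t ^ (s - (n:ℝ))⁻¹) ^ (n:ℕ)) * volume (Metric.ball (0:Rn n) 1) := by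
            rw [Measure.addHaar_closedBall volume _ (Real.rpow_nonneg ht0.le _),
              finrank_euclideanSpace_fin]
        _ = ENNReal.ofReal (unitBallVol n * t ^ p) := by
            rw [aux_ball1, ← ENNReal.ofReal_mul (by positivity)]
            congr 1
            rw [← Real.rpow_natCast (t ^ (s - (n:ℝ))⁻¹) n, ← Real.rpow_mul ht0.le,
              inv_mul_eq_div, ← hp]
            ring
    have hIntOn : IntegrableOn (fun t : ℝ => unitBallVol n * t ^ p) (Ioi a) :=
      (integrableOn_Ioi_rpow_of_lt hplt ha0).const_mul _
    have hnn : 0 ≤ᵐ[volume.restrict (Ioi a)] fun t : ℝ => unitBallVol n * t ^ p := by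
      filter_upwards [ae_restrict_mem measurableSet_Ioi] with t ht
      simp only [Pi.zero_apply]
      exact mul_nonneg hv0.le (Real.rpow_nonneg (ha0.trans ht).le _)
    calc ∫⁻ t in Ioi a, μB {x | t ≤ ‖x‖ ^ (s - (n:ℝ))}
        ≤ ∫⁻ t in Ioi a, ENNReal.ofReal (unitBallVol n * t ^ p) :=
          setLIntegral_mono' measurableSet_Ioi hb
      _ = ENNReal.ofReal (∫ t in Ioi a, unitBallVol n * t ^ p) :=
          (ofReal_integral_eq_lintegral_ofReal hIntOn hnn).symm
      _ = ENNReal.ofReal (((n:ℝ) - s) / s * (unitBallVol n * R ^ s)) := by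
          rw [integral_const_mul, integral_Ioi_rpow_of_lt hplt ha0]
          congr 1
          have h0 : s - (n:ℝ) ≠ 0 := hsn'.ne
          have hap : a ^ (p + 1) = R ^ s := by
            rw [ha, ← Real.rpow_mul hR.le]
            congr 1
            rw [hp]
            field_simp
            ring
          have hp1 : p + 1 = s / (s - (n:ℝ)) := by
            rw [hp]
            field_simp
            ring
          rw [hap, hp1, div_div_eq_mul_div]
          field_simp
          ring
  calc ∫⁻ t in Ioi (0:ℝ), μB {x | t ≤ ‖x‖ ^ (s - (n:ℝ))}
      ≤ ∫⁻ t in Ioc (0:ℝ) a ∪ Ioi a, μB {x | t ≤ ‖x‖ ^ (s - (n:ℝ))} :=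
        lintegral_mono_set Ioi_subset_Ioc_union_Ioi
    _ ≤ (∫⁻ t in Ioc (0:ℝ) a, μB {x | t ≤ ‖x‖ ^ (s - (n:ℝ))}) +
        ∫⁻ t in Ioi a, μB {x | t ≤ ‖x‖ ^ (s - (n:ℝ))} := lintegral_union_le _ _ _
    _ ≤ ENNReal.ofReal (unitBallVol n * R ^ s) +
        ENNReal.ofReal (((n:ℝ) - s) / s * (unitBallVol n * R ^ s)) := add_le_add hpiece1 hpiece2
    _ = ENNReal.ofReal ((n:ℝ) / s * unitBallVol n * R ^ s) := by
        rw [← ENNReal.ofReal_add (by positivity)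
          (mul_nonneg (div_nonneg (by linarith) hs0.le) (by positivity))]
        congr 1
        field_simp
        ring

lemma aux_setK {n : ℕ} (hn : 1 ≤ n) {s : ℝ} (hs0 : 0 < s) (hsn : s < n) {E : Set (Rn n)}
    (hEm : MeasurableSet E) (hEfin : volume E < ⊤) (z : Rn n) :
    ∫⁻ x in E, ENNReal.ofReal (‖x - z‖ ^ (s - (n:ℝ))) ≤
      ENNReal.ofReal ((n : ℝ) / s * unitBallVol n ^ (((n:ℝ) - s) / (n:ℝ)) *
        (volume E).toReal ^ (s / (n:ℝ))) := by
  haveI : Nontrivial (Rn n) := aux_nontrivial hn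
  have hn0 : (0:ℝ) < (n:ℝ) := by
    have : (1:ℝ) ≤ (n:ℝ) := by exact_mod_cast hn
    linarith
  have hsn' : s - (n:ℝ) < 0 := by linarith
  have hv0 := aux_vol_pos n
  by_cases hE0 : volume E = 0
  · rw [setLIntegral_measure_zero _ _ hE0]
    exact zero_le
  have hVpos : 0 < (volume E).toReal := ENNReal.toReal_pos hE0 hEfin.ne
  set V := (volume E).toReal with hVdef
  set R := (V / unitBallVol n) ^ ((n:ℝ))⁻¹ with hRdef
  have hR : 0 < R := Real.rpow_pos_of_pos (div_pos hVpos hv0) _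
  set B := Metric.ball z R with hBdef
  have hBm : MeasurableSet B := measurableSet_ball
  have hvolB : volume B = volume E := by
    have hRn : R ^ (n:ℕ) = V / unitBallVol n := by
      rw [hRdef, ← Real.rpow_natCast _ n, ← Real.rpow_mul (div_pos hVpos hv0).le,
        inv_mul_cancel₀ hn0.ne', Real.rpow_one]
    rw [hBdef, Measure.addHaar_ball volume _ hR.le, finrank_euclideanSpace_fin, hRn,
      aux_ball1, ← ENNReal.ofReal_mul (by positivity), div_mul_cancel₀ _ hv0.ne',
      ENNReal.ofReal_toReal hEfin.ne]
  have hfs : volume (E ∩ B) ≠ ⊤ := (lt_of_le_of_lt (measure_mono inter_subset_left) hEfin).ne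
  have hdiff : volume (E \ B) = volume (B \ E) := by
    have h1 := measure_inter_add_diff (μ := volume) E hBm
    have h2 := measure_inter_add_diff (μ := volume) B hEm
    have h3 : volume (E ∩ B) + volume (E \ B) = volume (E ∩ B) + volume (B \ E) := by
      rw [h1, ← hvolB, ← h2, inter_comm]
    exact (ENNReal.add_right_inj hfs).1 h3
  have hub : ∀ x ∈ E \ B, ENNReal.ofReal (‖x - z‖ ^ (s - (n:ℝ))) ≤
      ENNReal.ofReal (R ^ (s - (n:ℝ))) := by
    intro x hx
    have hxz : R ≤ ‖x - z‖ := by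
      have h := hx.2
      rw [hBdef, Metric.mem_ball, dist_eq_norm] at h
      linarith [not_lt.1 h]
    exact ENNReal.ofReal_le_ofReal (Real.rpow_le_rpow_of_nonpos hR hxz hsn'.le)
  have hlb : ∀ᵐ x ∂(volume : Measure (Rn n)), x ∈ B \ E →
      ENNReal.ofReal (R ^ (s - (n:ℝ))) ≤ ENNReal.ofReal (‖x - z‖ ^ (s - (n:ℝ))) := by
    have hz : ∀ᵐ x : Rn n ∂volume, x ≠ z := by
      rw [ae_iff]
      have : {x : Rn n | ¬x ≠ z} = {z} := by ext x; simp
      rw [this]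
      exact measure_singleton z
    filter_upwards [hz] with x hxz hx
    have h1 : 0 < ‖x - z‖ := norm_pos_iff.mpr (sub_ne_zero.mpr hxz)
    have h2 : ‖x - z‖ ≤ R := by
      have h := hx.1
      rw [hBdef, Metric.mem_ball, dist_eq_norm] at h
      linarith
    exact ENNReal.ofReal_le_ofReal (Real.rpow_le_rpow_of_nonpos h1 h2 hsn'.le)
  have hEsplit : ∫⁻ x in E, ENNReal.ofReal (‖x - z‖ ^ (s - (n:ℝ))) =
      (∫⁻ x in E ∩ B, ENNReal.ofReal (‖x - z‖ ^ (s - (n:ℝ)))) +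
      ∫⁻ x in E \ B, ENNReal.ofReal (‖x - z‖ ^ (s - (n:ℝ))) := by
    conv_lhs => rw [← inter_union_diff E B]
    exact lintegral_union (hEm.diff hBm) (disjoint_sdiff_self_right.mono_left inter_subset_right)
  have hBsplit : ∫⁻ x in B, ENNReal.ofReal (‖x - z‖ ^ (s - (n:ℝ))) =
      (∫⁻ x in B ∩ E, ENNReal.ofReal (‖x - z‖ ^ (s - (n:ℝ)))) +
      ∫⁻ x in B \ E, ENNReal.ofReal (‖x - z‖ ^ (s - (n:ℝ))) := by
    conv_lhs => rw [← inter_union_diff B E]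
    exact lintegral_union (hBm.diff hEm) (disjoint_sdiff_self_right.mono_left inter_subset_right)
  have hEB : ∫⁻ x in E \ B, ENNReal.ofReal (‖x - z‖ ^ (s - (n:ℝ))) ≤
      ∫⁻ x in B \ E, ENNReal.ofReal (‖x - z‖ ^ (s - (n:ℝ))) := by
    calc ∫⁻ x in E \ B, ENNReal.ofReal (‖x - z‖ ^ (s - (n:ℝ)))
        ≤ ∫⁻ _x in E \ B, ENNReal.ofReal (R ^ (s - (n:ℝ))) :=
          setLIntegral_mono' (hEm.diff hBm) hub
      _ = ENNReal.ofReal (R ^ (s - (n:ℝ))) * volume (E \ B) := setLIntegral_const _ _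
      _ = ENNReal.ofReal (R ^ (s - (n:ℝ))) * volume (B \ E) := by rw [hdiff]
      _ = ∫⁻ _x in B \ E, ENNReal.ofReal (R ^ (s - (n:ℝ))) := (setLIntegral_const _ _).symm
      _ ≤ ∫⁻ x in B \ E, ENNReal.ofReal (‖x - z‖ ^ (s - (n:ℝ))) :=
          setLIntegral_mono_ae' (hBm.diff hEm) hlb
  have htrans : ∫⁻ x in B, ENNReal.ofReal (‖x - z‖ ^ (s - (n:ℝ))) =
      ∫⁻ x in Metric.ball (0 : Rn n) R, ENNReal.ofReal (‖x‖ ^ (s - (n:ℝ))) := by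
    have hmp : MeasurePreserving (fun x : Rn n => x + z) volume volume :=
      measurePreserving_add_right volume z
    have hemb : MeasurableEmbedding (fun x : Rn n => x + z) :=
      (MeasurableEquiv.addRight z).measurableEmbedding
    have hpre : (fun x : Rn n => x + z) ⁻¹' B = Metric.ball (0 : Rn n) R := by
      ext x
      simp [hBdef, Metric.mem_ball, dist_eq_norm]
    have h := hmp.setLIntegral_comp_preimage_emb hemb
      (fun u => ENNReal.ofReal (‖u - z‖ ^ (s - (n:ℝ)))) B
    rw [hpre] at h
    simp_rw [add_sub_cancel_right] at h
    exact h.symm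
  calc ∫⁻ x in E, ENNReal.ofReal (‖x - z‖ ^ (s - (n:ℝ)))
      = (∫⁻ x in E ∩ B, ENNReal.ofReal (‖x - z‖ ^ (s - (n:ℝ)))) +
        ∫⁻ x in E \ B, ENNReal.ofReal (‖x - z‖ ^ (s - (n:ℝ))) := hEsplit
    _ ≤ (∫⁻ x in E ∩ B, ENNReal.ofReal (‖x - z‖ ^ (s - (n:ℝ)))) +
        ∫⁻ x in B \ E, ENNReal.ofReal (‖x - z‖ ^ (s - (n:ℝ))) := add_le_add_right hEB _
    _ = (∫⁻ x in B ∩ E, ENNReal.ofReal (‖x - z‖ ^ (s - (n:ℝ)))) +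
        ∫⁻ x in B \ E, ENNReal.ofReal (‖x - z‖ ^ (s - (n:ℝ))) := by rw [inter_comm]
    _ = ∫⁻ x in B, ENNReal.ofReal (‖x - z‖ ^ (s - (n:ℝ))) := hBsplit.symm
    _ = ∫⁻ x in Metric.ball (0 : Rn n) R, ENNReal.ofReal (‖x‖ ^ (s - (n:ℝ))) := htrans
    _ ≤ ENNReal.ofReal ((n : ℝ) / s * unitBallVol n * R ^ s) := aux_ballK hn hs0 hsn hR
    _ = ENNReal.ofReal ((n : ℝ) / s * unitBallVol n ^ (((n:ℝ) - s) / (n:ℝ)) *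
        V ^ (s / (n:ℝ))) := by
        congr 1
        have hRs : R ^ s = V ^ (s / (n:ℝ)) / unitBallVol n ^ (s / (n:ℝ)) := by
          rw [hRdef, ← Real.rpow_mul (div_pos hVpos hv0).le, inv_mul_eq_div,
            Real.div_rpow hVpos.le hv0.le]
        rw [hRs, show ((n:ℝ) - s) / (n:ℝ) = 1 - s / (n:ℝ) by field_simp,
          Real.rpow_sub hv0, Real.rpow_one]
        ring

lemma aux_gamma_pos {n : ℕ} {s : ℝ} (hs0 : 0 < s) (hsn : s < n) : 0 < rieszGamma n s := by
  unfold rieszGamma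
  have h1 : 0 < Real.Gamma (((n:ℝ) - s) / 2) := Real.Gamma_pos_of_pos (by linarith)
  have h2 : 0 < Real.Gamma (s / 2) := Real.Gamma_pos_of_pos (by linarith)
  have h3 : (0:ℝ) < (2:ℝ) ^ (-s) := Real.rpow_pos_of_pos two_pos _
  have h4 : (0:ℝ) < Real.pi ^ (-(n:ℝ) / 2) := Real.rpow_pos_of_pos Real.pi_pos _
  positivity

theorem statement9 (n : ℕ) (hn : 1 ≤ n) (s : ℝ) (hs0 : 0 < s) (hsn : s < n)
    (f : Rn n → ℝ) (hf : Integrable f) :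
    weakNorm n s (rieszPotential n s f) ≤
      rieszGamma n s * unitBallVol n ^ (((n : ℝ) - s) / (n : ℝ)) * ((n : ℝ) / s) *
        ∫ x, |f x| := by
  have hn0 : (0:ℝ) < (n:ℝ) := by
    have : (1:ℝ) ≤ (n:ℝ) := by exact_mod_cast hn
    linarith
  have hv0 := aux_vol_pos n
  have hγ : 0 < rieszGamma n s := aux_gamma_pos hs0 hsn
  -- replace f by a strongly measurable representative
  set f' : Rn n → ℝ := hf.1.mk f with hf'def
  have hmeasf' : StronglyMeasurable f' := hf.1.stronglyMeasurable_mk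
  have haef : f =ᵐ[volume] f' := hf.1.ae_eq_mk
  have hf' : Integrable f' := hf.congr haef
  have hpot : rieszPotential n s f = rieszPotential n s f' := by
    funext x
    unfold rieszPotential
    congr 1
    refine integral_congr_ae ?_
    have hq : Measure.QuasiMeasurePreserving (fun y : Rn n => x - y) volume volume :=
      (Measure.measurePreserving_sub_left volume x).quasiMeasurePreserving
    have hnull : volume ((fun y : Rn n => x - y) ⁻¹' {u | ¬ f u = f' u}) = 0 :=
      hq.preimage_null (ae_iff.1 haef)
    have hae2 : ∀ᵐ y : Rn n ∂volume, f (x - y) = f' (x - y) := ae_iff.mpr hnull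
    filter_upwards [hae2] with y hy
    rw [hy]
  have hint_eq : ∫ x, |f x| = ∫ x, |f' x| :=
    integral_congr_ae (haef.mono fun x hx => by simp only [hx])
  rw [hpot, hint_eq]
  set I := rieszPotential n s f' with hIdef
  have hKm : Measurable fun y : Rn n => ENNReal.ofReal (‖y‖ ^ (s - (n:ℝ))) :=
    (measurable_norm.pow measurable_const).ennreal_ofReal
  have hImeas : Measurable I := by
    have h1 : StronglyMeasurable fun x : Rn n => ∫ y : Rn n, f' (x - y) * ‖y‖ ^ (s - (n:ℝ)) := by
      apply StronglyMeasurable.integral_prod_right'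
        (f := fun p : Rn n × Rn n => f' (p.1 - p.2) * ‖p.2‖ ^ (s - (n:ℝ)))
      exact ((hmeasf'.measurable.comp (measurable_fst.sub measurable_snd)).mul
        ((measurable_snd.norm).pow measurable_const)).stronglyMeasurable
    exact measurable_const.mul h1.measurable
  have hintf'_nonneg : (0:ℝ) ≤ ∫ x, |f' x| := integral_nonneg fun x => abs_nonneg _
  set C := rieszGamma n s * unitBallVol n ^ (((n:ℝ) - s) / (n:ℝ)) * ((n:ℝ) / s) * ∫ x, |f' x|
    with hC
  have hC0 : 0 ≤ C := by
    have : (0:ℝ) ≤ unitBallVol n ^ (((n:ℝ) - s) / (n:ℝ)) := Real.rpow_nonneg hv0.le _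
    have hns : (0:ℝ) ≤ (n:ℝ) / s := div_nonneg hn0.le hs0.le
    positivity
  refine Real.sSup_le ?_ hC0
  rintro c ⟨lam, hlam, rfl⟩
  set E := {x : Rn n | lam < |I x|} with hE
  have hEm : MeasurableSet E := measurableSet_lt measurable_const hImeas.abs
  by_cases hfin : volume E < ⊤
  case neg =>
    have : volume E = ⊤ := by
      rcases lt_or_ge (volume E) ⊤ with h | h
      · exact absurd h hfin
      · exact top_le_iff.1 h
    rw [this]
    rw [ENNReal.toReal_top, Real.zero_rpow (ne_of_gt (div_pos (by linarith) hn0))]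
    · rw [mul_zero]; exact hC0
  case pos =>
  set V := (volume E).toReal with hV
  set A := (n : ℝ) / s * unitBallVol n ^ (((n:ℝ) - s) / (n:ℝ)) * V ^ (s / (n:ℝ)) with hA
  have hA0 : 0 ≤ A := by
    have h1 : (0:ℝ) ≤ unitBallVol n ^ (((n:ℝ) - s) / (n:ℝ)) := Real.rpow_nonneg hv0.le _
    have h2 : (0:ℝ) ≤ V ^ (s / (n:ℝ)) := Real.rpow_nonneg ENNReal.toReal_nonneg _
    have hns : (0:ℝ) ≤ (n:ℝ) / s := div_nonneg hn0.le hs0.le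
    positivity
  -- pointwise bound
  have hpt : ∀ x : Rn n, ENNReal.ofReal |I x| ≤ ENNReal.ofReal (rieszGamma n s) *
      ∫⁻ y, ENNReal.ofReal |f' (x - y)| * ENNReal.ofReal (‖y‖ ^ (s - (n:ℝ))) := by
    intro x
    have h4 : ∀ y : Rn n, ENNReal.ofReal ‖f' (x - y) * ‖y‖ ^ (s - (n:ℝ))‖ =
        ENNReal.ofReal |f' (x - y)| * ENNReal.ofReal (‖y‖ ^ (s - (n:ℝ))) := by
      intro y
      rw [Real.norm_eq_abs, abs_mul, abs_of_nonneg (Real.rpow_nonneg (norm_nonneg y) _),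
        ENNReal.ofReal_mul (abs_nonneg _)]
    have h1 : |I x| = rieszGamma n s * ‖∫ y : Rn n, f' (x - y) * ‖y‖ ^ (s - (n:ℝ))‖ := by
      rw [hIdef]
      unfold rieszPotential
      rw [abs_mul, abs_of_nonneg hγ.le, Real.norm_eq_abs]
    rw [h1, ENNReal.ofReal_mul hγ.le]
    refine mul_le_mul_right ?_ _
    have h3 := norm_integral_le_lintegral_norm (μ := (volume : Measure (Rn n)))
      (fun y => f' (x - y) * ‖y‖ ^ (s - (n:ℝ)))
    refine le_trans (ENNReal.ofReal_le_of_le_toReal h3) ?_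
    refine le_of_eq (lintegral_congr fun y => h4 y)
  -- substitution y ↦ x - y
  have hsubst : ∀ x : Rn n, (∫⁻ y, ENNReal.ofReal |f' (x - y)| *
      ENNReal.ofReal (‖y‖ ^ (s - (n:ℝ)))) =
      ∫⁻ u, ENNReal.ofReal |f' u| * ENNReal.ofReal (‖x - u‖ ^ (s - (n:ℝ))) := by
    intro x
    have hmp : MeasurePreserving (fun y : Rn n => x - y) volume volume :=
      Measure.measurePreserving_sub_left volume x
    have hemb : MeasurableEmbedding (fun y : Rn n => x - y) :=
      (MeasurableEquiv.subLeft x).measurableEmbedding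
    have h := hmp.lintegral_comp_emb hemb
      (fun u => ENNReal.ofReal |f' u| * ENNReal.ofReal (‖x - u‖ ^ (s - (n:ℝ))))
    simp_rw [sub_sub_cancel] at h
    exact h
  have key : ENNReal.ofReal lam * volume E ≤
      ENNReal.ofReal (rieszGamma n s * ((∫ u, |f' u|) * A)) := by
    calc ENNReal.ofReal lam * volume E
        = ∫⁻ _x in E, ENNReal.ofReal lam := (setLIntegral_const _ _).symm
      _ ≤ ∫⁻ x in E, ENNReal.ofReal |I x| := by
          refine setLIntegral_mono hImeas.abs.ennreal_ofReal fun x hx => ?_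
          exact ENNReal.ofReal_le_ofReal (le_of_lt hx)
      _ ≤ ∫⁻ x in E, ENNReal.ofReal (rieszGamma n s) *
            ∫⁻ y, ENNReal.ofReal |f' (x - y)| * ENNReal.ofReal (‖y‖ ^ (s - (n:ℝ))) := by
          refine setLIntegral_mono ?_ fun x _ => hpt x
          refine Measurable.const_mul ?_ _
          refine Measurable.lintegral_prod_right' (f := fun p : Rn n × Rn n =>
            ENNReal.ofReal |f' (p.1 - p.2)| * ENNReal.ofReal (‖p.2‖ ^ (s - (n:ℝ)))) ?_
          exact ((hmeasf'.measurable.comp (measurable_fst.sub measurable_snd)).abs.ennreal_ofReal).mul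
            (hKm.comp measurable_snd)
      _ = ENNReal.ofReal (rieszGamma n s) * ∫⁻ x in E,
            ∫⁻ y, ENNReal.ofReal |f' (x - y)| * ENNReal.ofReal (‖y‖ ^ (s - (n:ℝ))) :=
          lintegral_const_mul' _ _ ENNReal.ofReal_ne_top
      _ = ENNReal.ofReal (rieszGamma n s) * ∫⁻ x in E,
            ∫⁻ u, ENNReal.ofReal |f' u| * ENNReal.ofReal (‖x - u‖ ^ (s - (n:ℝ))) := by
          congr 1
          exact lintegral_congr fun x => hsubst x
      _ = ENNReal.ofReal (rieszGamma n s) * ∫⁻ u, ∫⁻ x in E,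
            ENNReal.ofReal |f' u| * ENNReal.ofReal (‖x - u‖ ^ (s - (n:ℝ))) := by
          congr 1
          refine lintegral_lintegral_swap ?_
          exact (((hmeasf'.measurable.comp measurable_snd).abs.ennreal_ofReal).mul
            (hKm.comp (measurable_fst.sub measurable_snd))).aemeasurable
      _ = ENNReal.ofReal (rieszGamma n s) * ∫⁻ u, ENNReal.ofReal |f' u| *
            ∫⁻ x in E, ENNReal.ofReal (‖x - u‖ ^ (s - (n:ℝ))) := by
          congr 1
          exact lintegral_congr fun u => lintegral_const_mul' _ _ ENNReal.ofReal_ne_top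
      _ ≤ ENNReal.ofReal (rieszGamma n s) * ∫⁻ u, ENNReal.ofReal |f' u| *
            ENNReal.ofReal A := by
          refine mul_le_mul_right (lintegral_mono fun u => mul_le_mul_right ?_ _) _
          exact aux_setK hn hs0 hsn hEm hfin u
      _ = ENNReal.ofReal (rieszGamma n s) *
            ((∫⁻ u, ENNReal.ofReal |f' u|) * ENNReal.ofReal A) := by
          rw [lintegral_mul_const' _ _ ENNReal.ofReal_ne_top]
      _ = ENNReal.ofReal (rieszGamma n s) *
            (ENNReal.ofReal (∫ u, |f' u|) * ENNReal.ofReal A) := by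
          rw [ofReal_integral_eq_lintegral_ofReal hf'.abs
            (Filter.Eventually.of_forall fun u => abs_nonneg _)]
      _ = ENNReal.ofReal (rieszGamma n s * ((∫ u, |f' u|) * A)) := by
          rw [← ENNReal.ofReal_mul hintf'_nonneg, ← ENNReal.ofReal_mul hγ.le]
  have hVE : volume E = ENNReal.ofReal V := (ENNReal.ofReal_toReal hfin.ne).symm
  have hreal : lam * V ≤ rieszGamma n s * ((∫ u, |f' u|) * A) := by
    have key2 : ENNReal.ofReal (lam * V) ≤
        ENNReal.ofReal (rieszGamma n s * ((∫ u, |f' u|) * A)) := by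
      rw [ENNReal.ofReal_mul hlam.le, ← hVE]
      exact key
    exact (ENNReal.ofReal_le_ofReal_iff (by positivity)).1 key2
  show lam * V ^ (((n : ℝ) - s) / (n : ℝ)) ≤ C
  rcases eq_or_lt_of_le (ENNReal.toReal_nonneg : (0:ℝ) ≤ V) with hV0 | hVpos
  · rw [hV, ← hV0, Real.zero_rpow (ne_of_gt (div_pos (by linarith) hn0)), mul_zero]
    exact hC0
  · have hsplit : V = V ^ (((n:ℝ) - s) / (n:ℝ)) * V ^ (s / (n:ℝ)) := by
      rw [← Real.rpow_add hVpos]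
      rw [show ((n:ℝ) - s) / (n:ℝ) + s / (n:ℝ) = 1 by field_simp; ring]
      exact (Real.rpow_one V).symm
    have h2 : lam * V ^ (((n:ℝ) - s) / (n:ℝ)) * V ^ (s / (n:ℝ)) ≤ C * V ^ (s / (n:ℝ)) := by
      calc lam * V ^ (((n:ℝ) - s) / (n:ℝ)) * V ^ (s / (n:ℝ)) = lam * V := by
            rw [mul_assoc, ← hsplit]
        _ ≤ rieszGamma n s * ((∫ u, |f' u|) * A) := hreal
        _ = C * V ^ (s / (n:ℝ)) := by rw [hC, hA]; ring
    exact le_of_mul_le_mul_right h2 (Real.rpow_pos_of_pos hVpos _)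
end
end

section
/- Let n ≥ 1 be an integer, 0 < s < n, let g(x) = (2/(1+|x|²))^{(n+s)/2}, and let c_{n,s} = π^{n/2} 2^{(s+n)/2} Γ(s/2)/Γ((s+n)/2). Then for every λ with 0 < λ < γ_s c_{n,s}, the set {x ∈ ℝ^n : I_s g(x) > λ} has Lebesgue measure v_n ((γ_s c_{n,s}/λ)^{2/(n−s)} − 1)^{n/2}. -/
open MeasureTheory Real Set
open scoped ENNReal

noncomputable section

lemma lintGamma {a r : ℝ} (ha : 0 < a) (hr : 0 < r) :
    ∫⁻ t in Ioi (0:ℝ), ENNReal.ofReal (t ^ (a-1) * exp (-(r*t)))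
      = ENNReal.ofReal ((1/r)^a * Real.Gamma a) := by
  have hint : IntegrableOn (fun t : ℝ => t ^ (a-1) * exp (-(r*t))) (Ioi 0) := by
    have := integrableOn_rpow_mul_exp_neg_mul_rpow (s := a - 1) (p := 1) (b := r)
      (by linarith) one_pos hr
    simpa [Real.rpow_one, neg_mul] using this
  rw [← ofReal_integral_eq_lintegral_ofReal hint ?_,
    integral_rpow_mul_exp_neg_mul_Ioi ha hr]
  filter_upwards [ae_restrict_mem measurableSet_Ioi] with t ht
  have : (0:ℝ) < t := ht
  positivity

lemma lintSub {c : ℝ} (hc : 0 < c) (f : ℝ → ℝ≥0∞) (hf : Measurable f) :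
    ∫⁻ t in Ioi (0:ℝ), f t = ENNReal.ofReal c * ∫⁻ v in Ioi (0:ℝ), f (c * v) := by
  have hm : MeasurableEmbedding (fun x : ℝ => c * x) :=
    (Homeomorph.mulLeft₀ c hc.ne').measurableEmbedding
  have h1 : ∫⁻ y in Ioi (0:ℝ), f y ∂(Measure.map (fun x : ℝ => c * x) volume)
      = ∫⁻ x in (fun x : ℝ => c * x) ⁻¹' (Ioi 0), f (c * x) :=
    setLIntegral_map measurableSet_Ioi hf hm.measurable
  have hpre : (fun x : ℝ => c * x) ⁻¹' (Ioi (0:ℝ)) = Ioi 0 := by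
    ext x
    simp only [mem_preimage, mem_Ioi]
    constructor
    · intro h
      nlinarith
    · intro h
      positivity
  rw [Real.map_volume_mul_left hc.ne', hpre] at h1
  rw [Measure.restrict_smul, lintegral_smul_measure] at h1
  rw [← h1, abs_of_pos (inv_pos.mpr hc), smul_eq_mul, ← mul_assoc, ← ENNReal.ofReal_mul hc.le,
    mul_inv_cancel₀ hc.ne', ENNReal.ofReal_one, one_mul]

lemma gaussIntegrable (n : ℕ) {b : ℝ} (hb : 0 < b) :
    Integrable (fun y : Rn n => rexp (-(b * ‖y‖^2))) := by
  have h := GaussianFourier.integrable_cexp_neg_mul_sq_norm_add (V := Rn n)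
    (b := (b:ℂ)) (by simpa using hb) 0 0
  have h2 : ∀ v : Rn n, (Complex.exp (-(b:ℂ) * ‖v‖^2 + 0 * (inner ℝ 0 v : ℝ))).re
      = rexp (-(b * ‖v‖^2)) := by
    intro v
    have : (-(b:ℂ) * (‖v‖:ℂ)^2 + 0 * ((inner ℝ (0 : Rn n) v : ℝ) : ℂ)) = ((-(b * ‖v‖^2) : ℝ) : ℂ) := by
      push_cast; ring
    rw [this, Complex.exp_ofReal_re]
  exact (h.re).congr (by filter_upwards with v using h2 v)

lemma gaussValue (n : ℕ) {b : ℝ} (hb : 0 < b) :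
    ∫ y : Rn n, rexp (-(b * ‖y‖^2)) = (π / b) ^ ((n:ℝ)/2) := by
  have := GaussianFourier.integral_rexp_neg_mul_sq_norm (V := Rn n) hb
  simpa [neg_mul, finrank_euclideanSpace, Fintype.card_fin] using this

lemma lintGauss (n : ℕ) (x : Rn n) {t u : ℝ} (ht : 0 < t) (hu : 0 < u) :
    ∫⁻ y : Rn n, ENNReal.ofReal (rexp (-(t * ‖y‖^2 + u * ‖x - y‖^2)))
      = ENNReal.ofReal ((π/(t+u)) ^ ((n:ℝ)/2) * rexp (-(t*u/(t+u) * ‖x‖^2))) := by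
  have htu : 0 < t + u := by linarith
  set w : Rn n := (u/(t+u)) • x with hw
  have hkey : ∀ y : Rn n, t * ‖y‖^2 + u * ‖x - y‖^2
      = (t+u) * ‖y - w‖^2 + t*u/(t+u) * ‖x‖^2 := by
    intro y
    have h1 : ‖x - y‖^2 = ‖x‖^2 - 2 * (inner ℝ x y : ℝ) + ‖y‖^2 := norm_sub_sq_real x y
    have h2 : ‖y - w‖^2 = ‖y‖^2 - 2 * (inner ℝ y w : ℝ) + ‖w‖^2 := norm_sub_sq_real y w
    have h3 : (inner ℝ y w : ℝ) = (u/(t+u)) * (inner ℝ x y : ℝ) := by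
      rw [hw, real_inner_smul_right, real_inner_comm]
    have h4 : ‖w‖^2 = (u/(t+u))^2 * ‖x‖^2 := by
      rw [hw, norm_smul, mul_pow, Real.norm_eq_abs, sq_abs]
    rw [h1, h2, h3, h4]
    field_simp
    ring
  have step1 : ∫⁻ y : Rn n, ENNReal.ofReal (rexp (-(t * ‖y‖^2 + u * ‖x - y‖^2)))
      = (∫⁻ y : Rn n, ENNReal.ofReal (rexp (-((t+u) * ‖y - w‖^2))))
        * ENNReal.ofReal (rexp (-(t*u/(t+u) * ‖x‖^2))) := by
    rw [← lintegral_mul_const' _ _ ENNReal.ofReal_ne_top]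
    refine lintegral_congr fun y => ?_
    rw [← ENNReal.ofReal_mul (exp_nonneg _), ← Real.exp_add, hkey y, neg_add]
  have htr : ∫⁻ y : Rn n, ENNReal.ofReal (rexp (-((t+u) * ‖y - w‖^2)))
      = ∫⁻ y : Rn n, ENNReal.ofReal (rexp (-((t+u) * ‖y‖^2))) := by
    have := lintegral_add_right_eq_self (μ := (volume : Measure (Rn n)))
      (fun z : Rn n => ENNReal.ofReal (rexp (-((t+u) * ‖z‖^2)))) (-w)
    simpa [sub_eq_add_neg] using this
  have hval : ∫⁻ y : Rn n, ENNReal.ofReal (rexp (-((t+u) * ‖y‖^2)))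
      = ENNReal.ofReal ((π/(t+u)) ^ ((n:ℝ)/2)) := by
    rw [← ofReal_integral_eq_lintegral_ofReal (gaussIntegrable n htu)
      (by filter_upwards with y using exp_nonneg _), gaussValue n htu]
  rw [step1, htr, hval, ← ENNReal.ofReal_mul (by positivity)]

lemma lintBeta {p q : ℝ} (hp : 0 < p) (hq : 0 < q) :
    ∫⁻ w in Ioi (0:ℝ), ENNReal.ofReal (w ^ (p-1) * (1+w) ^ (-(p+q)))
      = ENNReal.ofReal (Real.Gamma p * Real.Gamma q / Real.Gamma (p+q)) := by
  have hpq : 0 < p + q := by linarith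
  have hGpq : 0 < Real.Gamma (p+q) := Real.Gamma_pos_of_pos hpq
  rw [← ENNReal.mul_right_inj (a := ENNReal.ofReal (Real.Gamma (p+q)))
    (by simp [hGpq]) ENNReal.ofReal_ne_top]
  have lhs1 : ENNReal.ofReal (Real.Gamma (p+q))
        * ∫⁻ w in Ioi (0:ℝ), ENNReal.ofReal (w ^ (p-1) * (1+w) ^ (-(p+q)))
      = ∫⁻ w in Ioi (0:ℝ), ∫⁻ t in Ioi (0:ℝ),
          ENNReal.ofReal (w ^ (p-1)) * ENNReal.ofReal (t ^ (p+q-1) * exp (-((1+w)*t))) := by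
    rw [← lintegral_const_mul' _ _ ENNReal.ofReal_ne_top]
    refine setLIntegral_congr_fun measurableSet_Ioi ?_
    intro w hw; beta_reduce
    have hw0 : (0:ℝ) < w := mem_Ioi.mp hw
    have hw1 : (0:ℝ) < 1 + w := by linarith
    rw [lintegral_const_mul' _ _ ENNReal.ofReal_ne_top, lintGamma hpq hw1,
      ← ENNReal.ofReal_mul hGpq.le, ← ENNReal.ofReal_mul (by positivity)]
    congr 1
    rw [Real.rpow_neg hw1.le, one_div, Real.inv_rpow hw1.le]
    ring
  rw [lhs1]
  have hmeas : Measurable (Function.uncurry fun (w t : ℝ) =>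
      ENNReal.ofReal (w ^ (p-1)) * ENNReal.ofReal (t ^ (p+q-1) * exp (-((1+w)*t)))) := by
    fun_prop
  rw [lintegral_lintegral_swap hmeas.aemeasurable]
  have lhs2 : ∫⁻ t in Ioi (0:ℝ), ∫⁻ w in Ioi (0:ℝ),
        ENNReal.ofReal (w ^ (p-1)) * ENNReal.ofReal (t ^ (p+q-1) * exp (-((1+w)*t)))
      = ∫⁻ t in Ioi (0:ℝ), ENNReal.ofReal (Real.Gamma p * (t ^ (q-1) * exp (-(1*t)))) := by
    refine setLIntegral_congr_fun measurableSet_Ioi ?_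
    intro t ht; beta_reduce
    have ht0 : (0:ℝ) < t := mem_Ioi.mp ht
    have inner1 : ∫⁻ w in Ioi (0:ℝ),
          ENNReal.ofReal (w ^ (p-1)) * ENNReal.ofReal (t ^ (p+q-1) * exp (-((1+w)*t)))
        = ENNReal.ofReal (t ^ (p+q-1) * exp (-t)) * ENNReal.ofReal ((1/t)^p * Real.Gamma p) := by
      rw [← lintGamma hp ht0, ← lintegral_const_mul' _ _ ENNReal.ofReal_ne_top]
      refine setLIntegral_congr_fun measurableSet_Ioi ?_
      intro w hw; beta_reduce
      have hw0 : (0:ℝ) < w := mem_Ioi.mp hw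
      rw [← ENNReal.ofReal_mul (by positivity), ← ENNReal.ofReal_mul (by positivity)]
      congr 1
      have h5 : (1+w)*t = t + t*w := by ring
      rw [h5, neg_add, Real.exp_add]
      ring
    rw [inner1, ← ENNReal.ofReal_mul (by positivity)]
    congr 1
    have h1 : (1/t : ℝ)^p = t ^ (-p) := by
      rw [Real.rpow_neg ht0.le, one_div, Real.inv_rpow ht0.le]
    have h2 : t ^ (p+q-1) * t ^ (-p) = t ^ (q-1) := by
      rw [← Real.rpow_add ht0]; ring_nf
    rw [h1]
    calc t ^ (p+q-1) * exp (-t) * (t ^ (-p) * Real.Gamma p)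
        = Real.Gamma p * (t ^ (p+q-1) * t ^ (-p) * exp (-t)) := by ring
      _ = Real.Gamma p * (t ^ (q-1) * exp (-(1*t))) := by rw [h2, one_mul]
  rw [lhs2]
  simp_rw [ENNReal.ofReal_mul (Real.Gamma_pos_of_pos hp).le]
  rw [lintegral_const_mul' _ _ ENNReal.ofReal_ne_top, lintGamma hq one_pos,
    ← ENNReal.ofReal_mul (Real.Gamma_pos_of_pos hp).le,
    ← ENNReal.ofReal_mul hGpq.le]
  congr 1
  field_simp
  exact Real.one_rpow q

set_option maxHeartbeats 2000000 in
lemma keyIdentity (n : ℕ) (hn : 1 ≤ n) {s : ℝ} (hs0 : 0 < s) (hsn : s < (n:ℝ)) (x : Rn n) :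
    ∫⁻ y : Rn n, ENNReal.ofReal (((2:ℝ)/(1+‖x - y‖^2)) ^ ((s+(n:ℝ))/2) * ‖y‖ ^ (s - (n:ℝ)))
      = ENNReal.ofReal ((π ^ ((n:ℝ)/2) * 2 ^ ((s+(n:ℝ))/2) * Real.Gamma (s/2)
          / Real.Gamma ((s+(n:ℝ))/2)) * (1+‖x‖^2) ^ (-(((n:ℝ)-s)/2))) := by
  have hn' : (0:ℝ) < n := hs0.trans hsn
  set a : ℝ := ((n:ℝ)-s)/2 with ha_def
  set b : ℝ := (s+(n:ℝ))/2 with hb_def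
  have ha : 0 < a := by rw [ha_def]; linarith
  have hb : 0 < b := by rw [hb_def]; linarith
  have hab : a + b = (n:ℝ) := by rw [ha_def, hb_def]; ring
  have hGa := Real.Gamma_pos_of_pos ha
  have hGb := Real.Gamma_pos_of_pos hb
  have hGn2 := Real.Gamma_pos_of_pos (show (0:ℝ) < (n:ℝ)/2 by linarith)
  have hGs2 := Real.Gamma_pos_of_pos (show (0:ℝ) < s/2 by linarith)
  set R : ℝ := 1 + ‖x‖^2 with hR_def
  have hR : 0 < R := by rw [hR_def]; positivity
  haveI : Nontrivial (Rn n) := by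
    refine ⟨⟨EuclideanSpace.single ⟨0, hn⟩ 1, 0, fun h => ?_⟩⟩
    have h2 : (EuclideanSpace.single ⟨0, hn⟩ (1:ℝ) : Rn n) ⟨0, hn⟩ = (0 : Rn n) ⟨0, hn⟩ := by rw [h]
    rw [EuclideanSpace.single_apply] at h2
    simp at h2
  have h0 : (volume : Measure (Rn n)) {0} = 0 := measure_singleton _
  have hae : ∀ᵐ (y : Rn n), y ≠ (0 : Rn n) := by
    rw [ae_iff]
    convert h0 using 2
    ext y
    simp
  -- reduce to cancellation
  rw [← ENNReal.mul_right_inj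
    (a := ENNReal.ofReal (Real.Gamma a) * ENNReal.ofReal (Real.Gamma b))
    (mul_ne_zero (by simp [ENNReal.ofReal_eq_zero, not_le, hGa])
      (by simp [ENNReal.ofReal_eq_zero, not_le, hGb]))
    (ENNReal.mul_ne_top ENNReal.ofReal_ne_top ENNReal.ofReal_ne_top)]
  have step1 : (ENNReal.ofReal (Real.Gamma a) * ENNReal.ofReal (Real.Gamma b)) *
      ∫⁻ y : Rn n, ENNReal.ofReal (((2:ℝ)/(1+‖x - y‖^2)) ^ b * ‖y‖ ^ (s - (n:ℝ)))
    = ENNReal.ofReal ((2:ℝ)^b) * ∫⁻ y : Rn n,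
        (∫⁻ t in Ioi (0:ℝ), ENNReal.ofReal (t ^ (a-1) * exp (-(‖y‖^2 * t))))
        * (∫⁻ u in Ioi (0:ℝ), ENNReal.ofReal (u ^ (b-1) * exp (-((1+‖x-y‖^2) * u)))) := by
    rw [← lintegral_const_mul' _ _
        (ENNReal.mul_ne_top ENNReal.ofReal_ne_top ENNReal.ofReal_ne_top),
      ← lintegral_const_mul' _ _ ENNReal.ofReal_ne_top]
    refine lintegral_congr_ae ?_
    filter_upwards [hae] with y hy
    have hy0 : (0:ℝ) < ‖y‖ := norm_pos_iff.mpr hy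
    have hy2 : (0:ℝ) < ‖y‖^2 := by positivity
    have hd : (0:ℝ) < 1 + ‖x-y‖^2 := by positivity
    rw [lintGamma ha hy2, lintGamma hb hd,
      ← ENNReal.ofReal_mul hGa.le,
      ← ENNReal.ofReal_mul (by positivity),
      ← ENNReal.ofReal_mul (by positivity),
      ← ENNReal.ofReal_mul (by positivity)]
    congr 1
    have e1 : ((1:ℝ)/‖y‖^2)^a = ‖y‖ ^ (s-(n:ℝ)) := by
      have h2 : (1:ℝ)/‖y‖^2 = ‖y‖ ^ (-2 : ℝ) := by
        rw [Real.rpow_neg (norm_nonneg y), one_div]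
        congr 1
        rw [← Real.rpow_natCast ‖y‖ 2]
        norm_num
      rw [h2, ← Real.rpow_mul (norm_nonneg y)]
      congr 1
      rw [ha_def]; ring
    have e2 : ((2:ℝ)/(1+‖x-y‖^2))^b = 2^b * ((1:ℝ)/(1+‖x-y‖^2))^b := by
      rw [show (2:ℝ)/(1+‖x-y‖^2) = 2 * ((1:ℝ)/(1+‖x-y‖^2)) by ring,
        Real.mul_rpow (by norm_num) (by positivity)]
    rw [e2, e1]
    ring
  rw [step1]
  have claimA : ∫⁻ y : Rn n,
      (∫⁻ t in Ioi (0:ℝ), ENNReal.ofReal (t ^ (a-1) * exp (-(‖y‖^2 * t))))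
      * (∫⁻ u in Ioi (0:ℝ), ENNReal.ofReal (u ^ (b-1) * exp (-((1+‖x-y‖^2) * u))))
    = ∫⁻ t in Ioi (0:ℝ), ∫⁻ u in Ioi (0:ℝ), ∫⁻ y : Rn n,
        ENNReal.ofReal (t ^ (a-1) * exp (-(‖y‖^2 * t)))
        * ENNReal.ofReal (u ^ (b-1) * exp (-((1+‖x-y‖^2) * u))) := by
    have e1 : ∀ y : Rn n,
        (∫⁻ t in Ioi (0:ℝ), ENNReal.ofReal (t ^ (a-1) * exp (-(‖y‖^2 * t))))
        * (∫⁻ u in Ioi (0:ℝ), ENNReal.ofReal (u ^ (b-1) * exp (-((1+‖x-y‖^2) * u))))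
      = ∫⁻ t in Ioi (0:ℝ), ENNReal.ofReal (t ^ (a-1) * exp (-(‖y‖^2 * t)))
          * ENNReal.ofReal (((1:ℝ)/(1+‖x-y‖^2)) ^ b * Real.Gamma b) := by
      intro y
      rw [lintGamma hb (by positivity), lintegral_mul_const' _ _ ENNReal.ofReal_ne_top]
    simp_rw [e1]
    rw [lintegral_lintegral_swap (Measurable.aemeasurable (by fun_prop))]
    refine lintegral_congr fun t => ?_
    have e2 : ∀ y : Rn n, ENNReal.ofReal (t ^ (a-1) * exp (-(‖y‖^2 * t)))
        * ENNReal.ofReal (((1:ℝ)/(1+‖x-y‖^2)) ^ b * Real.Gamma b)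
      = ∫⁻ u in Ioi (0:ℝ), ENNReal.ofReal (t ^ (a-1) * exp (-(‖y‖^2 * t)))
          * ENNReal.ofReal (u ^ (b-1) * exp (-((1+‖x-y‖^2) * u))) := by
      intro y
      rw [← lintGamma hb (by positivity), ← lintegral_const_mul' _ _ ENNReal.ofReal_ne_top]
    simp_rw [e2]
    exact lintegral_lintegral_swap (Measurable.aemeasurable (by fun_prop))
  rw [claimA]
  have claimB : ∫⁻ t in Ioi (0:ℝ), ∫⁻ u in Ioi (0:ℝ), ∫⁻ y : Rn n,
        ENNReal.ofReal (t ^ (a-1) * exp (-(‖y‖^2 * t)))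
        * ENNReal.ofReal (u ^ (b-1) * exp (-((1+‖x-y‖^2) * u)))
      = ∫⁻ t in Ioi (0:ℝ), ∫⁻ u in Ioi (0:ℝ), ENNReal.ofReal
          ((t ^ (a-1) * u ^ (b-1) * exp (-u))
            * ((π/(t+u)) ^ ((n:ℝ)/2) * exp (-(t*u/(t+u) * ‖x‖^2)))) := by
    refine setLIntegral_congr_fun measurableSet_Ioi ?_
    intro t ht; beta_reduce
    refine setLIntegral_congr_fun measurableSet_Ioi ?_
    intro u hu; beta_reduce
    have ht0 : (0:ℝ) < t := ht
    have hu0 : (0:ℝ) < u := hu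
    have e : ∀ y : Rn n, ENNReal.ofReal (t ^ (a-1) * exp (-(‖y‖^2 * t)))
        * ENNReal.ofReal (u ^ (b-1) * exp (-((1+‖x-y‖^2) * u)))
      = ENNReal.ofReal (t ^ (a-1) * u ^ (b-1) * exp (-u))
          * ENNReal.ofReal (exp (-(t * ‖y‖^2 + u * ‖x - y‖^2))) := by
      intro y
      rw [← ENNReal.ofReal_mul (by positivity), ← ENNReal.ofReal_mul (by positivity)]
      congr 1
      have hexp : exp (-(‖y‖^2 * t)) * exp (-((1+‖x-y‖^2) * u))
          = exp (-u) * exp (-(t * ‖y‖^2 + u * ‖x - y‖^2)) := by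
        rw [← Real.exp_add, ← Real.exp_add]
        congr 1
        ring
      calc t ^ (a-1) * exp (-(‖y‖^2 * t)) * (u ^ (b-1) * exp (-((1+‖x-y‖^2) * u)))
          = t ^ (a-1) * u ^ (b-1)
            * (exp (-(‖y‖^2 * t)) * exp (-((1+‖x-y‖^2) * u))) := by ring
        _ = t ^ (a-1) * u ^ (b-1) * (exp (-u) * exp (-(t * ‖y‖^2 + u * ‖x - y‖^2))) := by
            rw [hexp]
        _ = t ^ (a-1) * u ^ (b-1) * exp (-u) * exp (-(t * ‖y‖^2 + u * ‖x - y‖^2)) := by ring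
    simp_rw [e]
    rw [lintegral_const_mul' _ _ ENNReal.ofReal_ne_top, lintGauss n x ht0 hu0,
      ← ENNReal.ofReal_mul (by positivity)]
  rw [claimB]
  rw [lintegral_lintegral_swap (Measurable.aemeasurable (by fun_prop))]
  have claimD : ∫⁻ u in Ioi (0:ℝ), ∫⁻ t in Ioi (0:ℝ), ENNReal.ofReal
        ((t ^ (a-1) * u ^ (b-1) * exp (-u))
          * ((π/(t+u)) ^ ((n:ℝ)/2) * exp (-(t*u/(t+u) * ‖x‖^2))))
      = ∫⁻ u in Ioi (0:ℝ), ∫⁻ v in Ioi (0:ℝ), ENNReal.ofReal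
          (π ^ ((n:ℝ)/2) * ((1+v) ^ (-((n:ℝ)/2)) * v ^ (a-1)
            * (u ^ ((n:ℝ)/2-1) * exp (-((1 + v/(1+v)*‖x‖^2) * u))))) := by
    refine setLIntegral_congr_fun measurableSet_Ioi ?_
    intro u hu; beta_reduce
    have hu0 : (0:ℝ) < u := hu
    rw [lintSub hu0 (fun t => ENNReal.ofReal ((t ^ (a-1) * u ^ (b-1) * exp (-u))
        * ((π/(t+u)) ^ ((n:ℝ)/2) * exp (-(t*u/(t+u) * ‖x‖^2))))) (by fun_prop),
      ← lintegral_const_mul' _ _ ENNReal.ofReal_ne_top]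
    refine setLIntegral_congr_fun measurableSet_Ioi ?_
    intro v hv; beta_reduce
    have hv0 : (0:ℝ) < v := hv
    have h1v : (0:ℝ) < 1 + v := by linarith
    rw [← ENNReal.ofReal_mul hu0.le]
    congr 1
    have h2 : u*v+u = u*(1+v) := by ring
    have h1 : (u*v) ^ (a-1) = u^(a-1) * v^(a-1) := Real.mul_rpow hu0.le hv0.le
    have h3 : (π/(u*(1+v)))^((n:ℝ)/2)
        = π^((n:ℝ)/2) * ((1+v)^(-((n:ℝ)/2)) * u^(-((n:ℝ)/2))) := by
      rw [Real.div_rpow pi_pos.le (by positivity), Real.mul_rpow hu0.le h1v.le,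
        Real.rpow_neg h1v.le, Real.rpow_neg hu0.le, div_eq_mul_inv, mul_inv]
      ring
    have h4 : u*v*u/(u*(1+v)) = v/(1+v)*u := by
      field_simp
    have h5 : exp (-u) * exp (-(v/(1+v)*u * ‖x‖^2)) = exp (-((1 + v/(1+v)*‖x‖^2) * u)) := by
      rw [← Real.exp_add]
      congr 1
      ring
    have h6 : u * (u^(a-1) * (u^(b-1) * u^(-((n:ℝ)/2)))) = u^((n:ℝ)/2-1) := by
      rw [← Real.rpow_add hu0, ← Real.rpow_add hu0]
      nth_rewrite 1 [← Real.rpow_one u]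
      rw [← Real.rpow_add hu0]
      congr 1
      linarith [hab]
    rw [h2, h1, h3, h4]
    calc u * (u ^ (a-1) * v ^ (a-1) * u ^ (b-1) * exp (-u)
          * (π^((n:ℝ)/2) * ((1+v)^(-((n:ℝ)/2)) * u^(-((n:ℝ)/2)))
            * exp (-(v/(1+v)*u * ‖x‖^2))))
        = (u * (u^(a-1) * (u^(b-1) * u^(-((n:ℝ)/2)))))
            * (exp (-u) * exp (-(v/(1+v)*u * ‖x‖^2)))
            * (π^((n:ℝ)/2) * ((1+v)^(-((n:ℝ)/2)) * v^(a-1))) := by ring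
      _ = π ^ ((n:ℝ)/2) * ((1+v) ^ (-((n:ℝ)/2)) * v ^ (a-1)
            * (u ^ ((n:ℝ)/2-1) * exp (-((1 + v/(1+v)*‖x‖^2) * u)))) := by
          rw [h6, h5]
          ring
  rw [claimD]
  rw [lintegral_lintegral_swap (Measurable.aemeasurable (by fun_prop))]
  have claimF : ∫⁻ v in Ioi (0:ℝ), ∫⁻ u in Ioi (0:ℝ), ENNReal.ofReal
        (π ^ ((n:ℝ)/2) * ((1+v) ^ (-((n:ℝ)/2)) * v ^ (a-1)
          * (u ^ ((n:ℝ)/2-1) * exp (-((1 + v/(1+v)*‖x‖^2) * u)))))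
      = ∫⁻ v in Ioi (0:ℝ), ENNReal.ofReal ((π ^ ((n:ℝ)/2) * Real.Gamma ((n:ℝ)/2))
          * (v ^ (a-1) * (1+v*R) ^ (-((n:ℝ)/2)))) := by
    refine setLIntegral_congr_fun measurableSet_Ioi ?_
    intro v hv; beta_reduce
    have hv0 : (0:ℝ) < v := hv
    have h1v : (0:ℝ) < 1 + v := by linarith
    have hA : (0:ℝ) < 1 + v/(1+v)*‖x‖^2 := by positivity
    have e : ∀ u : ℝ, ENNReal.ofReal (π ^ ((n:ℝ)/2) * ((1+v) ^ (-((n:ℝ)/2)) * v ^ (a-1)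
          * (u ^ ((n:ℝ)/2-1) * exp (-((1 + v/(1+v)*‖x‖^2) * u)))))
        = ENNReal.ofReal (π ^ ((n:ℝ)/2) * ((1+v) ^ (-((n:ℝ)/2)) * v ^ (a-1)))
          * ENNReal.ofReal (u ^ ((n:ℝ)/2-1) * exp (-((1 + v/(1+v)*‖x‖^2) * u))) := by
      intro u
      rw [show π ^ ((n:ℝ)/2) * ((1+v) ^ (-((n:ℝ)/2)) * v ^ (a-1)
          * (u ^ ((n:ℝ)/2-1) * exp (-((1 + v/(1+v)*‖x‖^2) * u))))
        = (π ^ ((n:ℝ)/2) * ((1+v) ^ (-((n:ℝ)/2)) * v ^ (a-1)))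
          * (u ^ ((n:ℝ)/2-1) * exp (-((1 + v/(1+v)*‖x‖^2) * u))) from by ring,
        ENNReal.ofReal_mul (by positivity)]
    simp_rw [e]
    rw [lintegral_const_mul' _ _ ENNReal.ofReal_ne_top,
      lintGamma (show (0:ℝ) < (n:ℝ)/2 by linarith) hA,
      ← ENNReal.ofReal_mul (by positivity)]
    congr 1
    have hAA : ((1:ℝ)+v) * (1 + v/(1+v)*‖x‖^2) = 1 + v*R := by
      rw [hR_def]
      field_simp
      ring
    have h7 : (1+v) ^ (-((n:ℝ)/2)) * ((1:ℝ)/(1 + v/(1+v)*‖x‖^2)) ^ ((n:ℝ)/2)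
        = (1+v*R) ^ (-((n:ℝ)/2)) := by
      rw [Real.rpow_neg h1v.le, one_div, Real.inv_rpow hA.le, ← mul_inv,
        ← Real.mul_rpow h1v.le hA.le, hAA, ← Real.rpow_neg (by positivity)]
    calc π ^ ((n:ℝ)/2) * ((1+v) ^ (-((n:ℝ)/2)) * v ^ (a-1))
          * (((1:ℝ)/(1 + v/(1+v)*‖x‖^2)) ^ ((n:ℝ)/2) * Real.Gamma ((n:ℝ)/2))
        = (π ^ ((n:ℝ)/2) * Real.Gamma ((n:ℝ)/2)) * v ^ (a-1)
            * ((1+v) ^ (-((n:ℝ)/2)) * ((1:ℝ)/(1 + v/(1+v)*‖x‖^2)) ^ ((n:ℝ)/2)) := by ring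
      _ = (π ^ ((n:ℝ)/2) * Real.Gamma ((n:ℝ)/2)) * (v ^ (a-1) * (1+v*R) ^ (-((n:ℝ)/2))) := by
          rw [h7]
          ring
  rw [claimF]
  have e9 : ∀ v : ℝ, ENNReal.ofReal ((π ^ ((n:ℝ)/2) * Real.Gamma ((n:ℝ)/2))
        * (v ^ (a-1) * (1+v*R) ^ (-((n:ℝ)/2))))
      = ENNReal.ofReal (π ^ ((n:ℝ)/2) * Real.Gamma ((n:ℝ)/2))
        * ENNReal.ofReal (v ^ (a-1) * (1+v*R) ^ (-((n:ℝ)/2))) :=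
    fun v => ENNReal.ofReal_mul (by positivity)
  simp_rw [e9]
  rw [lintegral_const_mul' _ _ ENNReal.ofReal_ne_top]
  have claimG : ∫⁻ v in Ioi (0:ℝ), ENNReal.ofReal (v ^ (a-1) * (1+v*R) ^ (-((n:ℝ)/2)))
      = ENNReal.ofReal (R ^ (-a) * (Real.Gamma a * Real.Gamma (s/2) / Real.Gamma ((n:ℝ)/2))) := by
    rw [lintSub (inv_pos.mpr hR) _ (by fun_prop)]
    have e10 : ∀ w ∈ Ioi (0:ℝ),
        ENNReal.ofReal ((R⁻¹*w) ^ (a-1) * (1+(R⁻¹*w)*R) ^ (-((n:ℝ)/2)))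
        = ENNReal.ofReal ((R⁻¹) ^ (a-1))
          * ENNReal.ofReal (w ^ (a-1) * (1+w) ^ (-(a+s/2))) := by
      intro w hw
      have hw0 : (0:ℝ) < w := hw
      rw [show R⁻¹*w*R = w from by field_simp,
        Real.mul_rpow (by positivity) hw0.le,
        show -((n:ℝ)/2) = -(a+s/2) from by rw [ha_def]; ring,
        mul_assoc, ENNReal.ofReal_mul (by positivity)]
    rw [setLIntegral_congr_fun measurableSet_Ioi e10,
      lintegral_const_mul' _ _ ENNReal.ofReal_ne_top,
      lintBeta ha (show (0:ℝ) < s/2 by linarith),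
      ← ENNReal.ofReal_mul (by positivity),
      ← ENNReal.ofReal_mul (by positivity)]
    congr 1
    have h8 : R⁻¹ * (R⁻¹) ^ (a-1) = R ^ (-a) := by
      rw [Real.inv_rpow hR.le, ← Real.rpow_neg hR.le, ← Real.rpow_neg_one R,
        ← Real.rpow_add hR]
      congr 1
      ring
    rw [show a + s/2 = (n:ℝ)/2 from by rw [ha_def]; ring, ← mul_assoc, h8]
  rw [claimG]
  rw [← ENNReal.ofReal_mul (by positivity), ← ENNReal.ofReal_mul (by positivity),
    ← ENNReal.ofReal_mul hGa.le, ← ENNReal.ofReal_mul (by positivity)]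
  congr 1
  field_simp

set_option maxHeartbeats 1000000 in
theorem statement13 (n : ℕ) (hn : 1 ≤ n) (s : ℝ) (hs0 : 0 < s) (hsn : s < n)
    (g : Rn n → ℝ)
    (hg : g = fun x => ((2 : ℝ) / (1 + ‖x‖ ^ 2)) ^ (((n : ℝ) + s) / 2))
    (c : ℝ)
    (hc : c = Real.pi ^ ((n : ℝ) / 2) * (2 : ℝ) ^ ((s + (n : ℝ)) / 2) *
        Real.Gamma (s / 2) / Real.Gamma ((s + (n : ℝ)) / 2))
    (lam : ℝ) (hlam0 : 0 < lam) (hlam1 : lam < rieszGamma n s * c) :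
    volume {x : Rn n | lam < rieszPotential n s g x} =
      ENNReal.ofReal (unitBallVol n *
        ((rieszGamma n s * c / lam) ^ (2 / ((n : ℝ) - s)) - 1) ^ ((n : ℝ) / 2)) := by
  have hn' : (0:ℝ) < n := hs0.trans hsn
  have hns : (0:ℝ) < (n:ℝ) - s := by linarith
  have hc0 : 0 < c := by
    rw [hc]
    exact div_pos (mul_pos (mul_pos (rpow_pos_of_pos pi_pos _) (rpow_pos_of_pos two_pos _))
      (Real.Gamma_pos_of_pos (by linarith))) (Real.Gamma_pos_of_pos (by linarith))
  have hγ : 0 < rieszGamma n s := by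
    unfold rieszGamma
    exact div_pos (mul_pos (mul_pos (rpow_pos_of_pos two_pos _) (rpow_pos_of_pos pi_pos _))
      (Real.Gamma_pos_of_pos (by linarith))) (Real.Gamma_pos_of_pos (by linarith))
  haveI : Nontrivial (Rn n) := by
    refine ⟨⟨EuclideanSpace.single ⟨0, hn⟩ 1, 0, fun h => ?_⟩⟩
    have h2 : (EuclideanSpace.single ⟨0, hn⟩ (1:ℝ) : Rn n) ⟨0, hn⟩ = (0 : Rn n) ⟨0, hn⟩ := by rw [h]
    rw [EuclideanSpace.single_apply] at h2
    simp at h2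
  -- pointwise formula for the Riesz potential
  have hpot : ∀ x : Rn n, rieszPotential n s g x
      = rieszGamma n s * c * (1+‖x‖^2) ^ (-(((n:ℝ)-s)/2)) := by
    intro x
    unfold rieszPotential
    have hint : ∫ y : Rn n, g (x - y) * ‖y‖ ^ (s - (n:ℝ))
        = c * (1+‖x‖^2) ^ (-(((n:ℝ)-s)/2)) := by
      rw [integral_eq_lintegral_of_nonneg_ae ?_ ?_]
      · have e : (fun y : Rn n => ENNReal.ofReal (g (x-y) * ‖y‖ ^ (s-(n:ℝ))))
            = fun y : Rn n => ENNReal.ofReal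
              (((2:ℝ)/(1+‖x - y‖^2)) ^ ((s+(n:ℝ))/2) * ‖y‖ ^ (s - (n:ℝ))) := by
          funext y
          rw [hg]
          norm_num [show ((n:ℝ)+s)/2 = (s+(n:ℝ))/2 from by ring]
        rw [e, keyIdentity n hn hs0 hsn x, ENNReal.toReal_ofReal (by positivity), hc]
      · filter_upwards with y
        rw [hg]
        positivity
      · apply Measurable.aestronglyMeasurable
        rw [hg]
        fun_prop
    rw [hint]
    ring
  -- the superlevel set is a ball
  set K : ℝ := (rieszGamma n s * c / lam) ^ (2 / ((n:ℝ) - s)) - 1 with hK_def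
  have hM : 1 < rieszGamma n s * c / lam := (one_lt_div hlam0).mpr hlam1
  have hK : 0 < K := by
    rw [hK_def]
    have : (1:ℝ) < (rieszGamma n s * c / lam) ^ (2 / ((n:ℝ) - s)) := by
      rw [show (1:ℝ) = 1 ^ (2 / ((n:ℝ) - s)) from (Real.one_rpow _).symm]
      exact Real.rpow_lt_rpow (by norm_num) hM (by positivity)
    linarith
  have hKM : (K + 1) ^ (((n:ℝ)-s)/2) = rieszGamma n s * c / lam := by
    rw [hK_def, sub_add_cancel, ← Real.rpow_mul (by positivity)]
    rw [show 2 / ((n:ℝ) - s) * (((n:ℝ)-s)/2) = 1 from by field_simp]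
    exact Real.rpow_one _
  have hset : {x : Rn n | lam < rieszPotential n s g x}
      = Metric.ball (0 : Rn n) (Real.sqrt K) := by
    ext x
    simp only [mem_setOf_eq, Metric.mem_ball, dist_zero_right]
    have hP : (0:ℝ) < 1 + ‖x‖^2 := by positivity
    rw [hpot x,
      show rieszGamma n s * c * (1+‖x‖^2) ^ (-(((n:ℝ)-s)/2))
        = (rieszGamma n s * c) / ((1+‖x‖^2) ^ (((n:ℝ)-s)/2)) from by
          rw [Real.rpow_neg hP.le]; ring,
      lt_div_iff₀ (Real.rpow_pos_of_pos hP _), mul_comm lam _,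
      ← lt_div_iff₀ hlam0, ← hKM,
      Real.rpow_lt_rpow_iff hP.le (by positivity) (by positivity),
      add_comm (1:ℝ) (‖x‖^2), add_lt_add_iff_right,
      ← Real.lt_sqrt (norm_nonneg x)]
  rw [hset, Measure.addHaar_ball volume (0 : Rn n) (Real.sqrt_nonneg K), finrank_euclideanSpace_fin]
  have hvol : volume (Metric.ball (0:Rn n) 1) = ENNReal.ofReal (unitBallVol n) :=
    (ENNReal.ofReal_toReal (measure_ball_lt_top).ne).symm
  rw [hvol, ← ENNReal.ofReal_mul (by positivity)]
  congr 1
  have hsq : Real.sqrt K ^ n = K ^ ((n:ℝ)/2) := by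
    rw [← Real.rpow_natCast (Real.sqrt K) n, Real.sqrt_eq_rpow, ← Real.rpow_mul hK.le]
    congr 1
    ring
  rw [hsq, mul_comm]
end
end
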